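/- arXiv:1001.0095 — 9 statements merged into one kernel-verified Lean document; each statement's English description precedes it below -/
import Mathlib

section
/- If f̃(z) = e^{-z} ∑_{k≥0} a_k z^k/k! is an entire function, then for every n, a_n = ∑_{j≥0} f̃^{(j)}(n)/j! · τ_j(n), where τ_j(n) := n![z^n](z-n)^j e^z. -/
open Finset Filter

section AUX

/-- Coefficient of `z^k` in `(z - n)^j * exp z`. -/
noncomputable def dcoef (n j k : ℕ) : ℂ :=
  ∑ ℓ ∈ Finset.range (j + 1),
    if ℓ ≤ k then (j.choose ℓ : ℂ) * (-(n : ℂ)) ^ (j - ℓ) / ((k - ℓ).factorial : ℂ) else 0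

/-- Real dominating coefficients. -/
noncomputable def dnorm (n j k : ℕ) : ℝ :=
  ∑ ℓ ∈ Finset.range (j + 1),
    if ℓ ≤ k then (j.choose ℓ : ℝ) * (n : ℝ) ^ (j - ℓ) / ((k - ℓ).factorial : ℝ) else 0

lemma dnorm_nonneg (n j k : ℕ) : 0 ≤ dnorm n j k := by
  apply Finset.sum_nonneg
  intro ℓ _
  split <;> positivity

lemma hasSum_shift {𝕜 : Type*} [NormedField 𝕜] {z E : 𝕜} (c : 𝕜) (ℓ : ℕ)
    (hE : HasSum (fun m => z ^ m / (m.factorial : 𝕜)) E) :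
    HasSum (fun k => (if ℓ ≤ k then c / ((k - ℓ).factorial : 𝕜) else 0) * z ^ k)
      (c * z ^ ℓ * E) := by
  have h1 : HasSum (fun m => c * z ^ ℓ * (z ^ m / (m.factorial : 𝕜))) (c * z ^ ℓ * E) :=
    hE.mul_left _
  have hinj : Function.Injective (fun m : ℕ => m + ℓ) := fun a b h => by simpa using h
  refine (hinj.hasSum_iff ?_).mp ?_
  · intro k hk
    have hlk : ¬ ℓ ≤ k := by
      intro h
      exact hk ⟨k - ℓ, by simpa using Nat.sub_add_cancel h⟩
    rw [if_neg hlk, zero_mul]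
  · convert h1 using 1
    funext m
    simp only [Function.comp]
    rw [if_pos (Nat.le_add_left ℓ m), Nat.add_sub_cancel, pow_add, div_eq_mul_inv,
      div_eq_mul_inv]
    ring

lemma hasSum_dcoef (n j : ℕ) (z : ℂ) :
    HasSum (fun k => dcoef n j k * z ^ k) ((z - (n : ℂ)) ^ j * Complex.exp z) := by
  have hexp : HasSum (fun m => z ^ m / (m.factorial : ℂ)) (Complex.exp z) := by
    rw [Complex.exp_eq_exp_ℂ]
    exact NormedSpace.expSeries_div_hasSum_exp z
  have h := hasSum_sum (s := Finset.range (j + 1))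
    (f := fun ℓ k => (if ℓ ≤ k then ((j.choose ℓ : ℂ) * (-(n : ℂ)) ^ (j - ℓ)) /
        ((k - ℓ).factorial : ℂ) else 0) * z ^ k)
    (a := fun ℓ => ((j.choose ℓ : ℂ) * (-(n : ℂ)) ^ (j - ℓ)) * z ^ ℓ * Complex.exp z)
    (fun ℓ _ => hasSum_shift _ ℓ hexp)
  convert h using 1
  · funext k
    rw [dcoef, Finset.sum_mul]
  · rw [← Finset.sum_mul, sub_eq_add_neg, add_pow]
    congr 1
    apply Finset.sum_congr rfl
    intro ℓ _
    ring

lemma hasSum_dnorm (n j : ℕ) (r : ℝ) :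
    HasSum (fun k => dnorm n j k * r ^ k) ((r + (n : ℝ)) ^ j * Real.exp r) := by
  have hexp : HasSum (fun m => r ^ m / (m.factorial : ℝ)) (Real.exp r) := by
    rw [Real.exp_eq_exp_ℝ]
    exact NormedSpace.expSeries_div_hasSum_exp r
  have h := hasSum_sum (s := Finset.range (j + 1))
    (f := fun ℓ k => (if ℓ ≤ k then ((j.choose ℓ : ℝ) * (n : ℝ) ^ (j - ℓ)) /
        ((k - ℓ).factorial : ℝ) else 0) * r ^ k)
    (a := fun ℓ => ((j.choose ℓ : ℝ) * (n : ℝ) ^ (j - ℓ)) * r ^ ℓ * Real.exp r)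
    (fun ℓ _ => hasSum_shift _ ℓ hexp)
  convert h using 1
  · funext k
    rw [dnorm, Finset.sum_mul]
  · rw [← Finset.sum_mul, add_pow]
    congr 1
    apply Finset.sum_congr rfl
    intro ℓ _
    ring

lemma norm_dcoef_le (n j k : ℕ) : ‖dcoef n j k‖ ≤ dnorm n j k := by
  refine (norm_sum_le _ _).trans ?_
  apply Finset.sum_le_sum
  intro ℓ _
  split
  · apply le_of_eq
    rw [norm_div, norm_mul, norm_pow, norm_neg]
    norm_num [Complex.norm_natCast]
  · simp

lemma norm_dcoef_le' (n j k : ℕ) : ‖dcoef n j k‖ ≤ ((n : ℝ) + 1) ^ j := by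
  refine (norm_dcoef_le n j k).trans ?_
  have h : ((n : ℝ) + 1) ^ j = (1 + (n : ℝ)) ^ j := by ring
  rw [h, add_pow]
  apply Finset.sum_le_sum
  intro ℓ hℓ
  split
  · rw [one_pow]
    rw [div_le_iff₀ (by positivity : (0:ℝ) < ((k - ℓ).factorial : ℝ))]
    have h1 : (1 : ℝ) ≤ ((k - ℓ).factorial : ℝ) := by
      exact_mod_cast Nat.one_le_iff_ne_zero.mpr (Nat.factorial_ne_zero _)
    have h2 : (0:ℝ) ≤ (j.choose ℓ : ℝ) * (n : ℝ) ^ (j - ℓ) := by positivity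
    nlinarith
  · positivity

lemma tau_eq_dcoef (j n : ℕ)
    (tau : ℕ → ℕ → ℂ)
    (htau : tau j n = ∑ ℓ ∈ Finset.range (j + 1),
      (j.choose ℓ : ℂ) * (-1) ^ (j - ℓ) * (n.descFactorial ℓ : ℂ) * (n : ℂ) ^ (j - ℓ)) :
    tau j n = (n.factorial : ℂ) * dcoef n j n := by
  rw [htau, dcoef, Finset.mul_sum]
  apply Finset.sum_congr rfl
  intro ℓ _
  by_cases h : ℓ ≤ n
  · rw [if_pos h]
    have hfac := Nat.factorial_mul_descFactorial h
    have hne : ((n - ℓ).factorial : ℂ) ≠ 0 := by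
      exact_mod_cast Nat.factorial_ne_zero _
    have hd : (n.descFactorial ℓ : ℂ) = (n.factorial : ℂ) / ((n - ℓ).factorial : ℂ) := by
      rw [eq_div_iff hne, mul_comm]
      exact_mod_cast congrArg (Nat.cast (R := ℂ)) hfac
    rw [hd, neg_pow]
    field_simp
    ring
  · rw [if_neg h, mul_zero]
    have : n.descFactorial ℓ = 0 := Nat.descFactorial_eq_zero_iff_lt.mpr (not_le.mp h)
    simp [this]

lemma summable_norm_mul_pow {u : ℕ → ℂ} {R : ℝ} (hR : Summable fun k => u k * (R : ℂ) ^ k)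
    {r : ℝ} (h0 : 0 ≤ r) (hlt : r < R) : Summable fun k => ‖u k‖ * r ^ k := by
  have hRpos : 0 < R := lt_of_le_of_lt h0 hlt
  have h1 : Tendsto (fun k => ‖u k * (R : ℂ) ^ k‖) atTop (nhds 0) := by
    simpa using hR.tendsto_atTop_zero.norm
  obtain ⟨C, hC⟩ := h1.bddAbove_range
  have hC' : ∀ k, ‖u k‖ * R ^ k ≤ C := by
    intro k
    have := hC (Set.mem_range_self (f := fun k => ‖u k * (R : ℂ) ^ k‖) k)
    simpa [norm_mul, norm_pow, Complex.norm_real, abs_of_pos hRpos] using this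
  refine Summable.of_nonneg_of_le (fun k => by positivity) (fun k => ?_)
    ((summable_geometric_of_lt_one (by positivity) ((div_lt_one hRpos).mpr hlt)).mul_left C)
  calc ‖u k‖ * r ^ k = (‖u k‖ * R ^ k) * (r / R) ^ k := by
        have hRk : (R:ℝ) ^ k ≠ 0 := by positivity
        rw [div_pow]
        field_simp
      _ ≤ C * (r / R) ^ k := by
        apply mul_le_mul_of_nonneg_right (hC' k) (by positivity)

end AUX

/-- The Poisson–Charlier coefficient τ_j(n) = ∑_{0≤ℓ≤j} C(j,ℓ)(-1)^{j-ℓ} n!/(n-ℓ)! · n^{j-ℓ}. -/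
noncomputable def tau (j n : ℕ) : ℂ :=
  ∑ ℓ ∈ Finset.range (j + 1),
    (j.choose ℓ : ℂ) * (-1) ^ (j - ℓ) * (n.descFactorial ℓ : ℂ) * (n : ℂ) ^ (j - ℓ)

set_option maxHeartbeats 1000000 in
/-- If the Poisson generating function f̃(z) = e^{-z} ∑ a_k z^k/k! is entire, then
the Poisson–Charlier expansion a_n = ∑_{j≥0} f̃^{(j)}(n)/j! · τ_j(n) is an identity. -/
theorem poisson_charlier_identity (a : ℕ → ℂ)
    (hconv : ∀ z : ℂ, Summable fun k => a k * z ^ k / (k.factorial : ℂ))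
    (f : ℂ → ℂ)
    (hf : ∀ z : ℂ, f z = Complex.exp (-z) * ∑' k, a k * z ^ k / (k.factorial : ℂ))
    (n : ℕ) :
    HasSum (fun j => iteratedDeriv j f (n : ℂ) / (j.factorial : ℂ) * tau j n) (a n) := by
  set g : ℂ → ℂ := fun z => ∑' k, a k * z ^ k / (k.factorial : ℂ) with hg
  have hfg : ∀ z : ℂ, g z = Complex.exp z * f z := by
    intro z
    rw [hf z, ← mul_assoc, ← Complex.exp_add, add_neg_cancel, Complex.exp_zero, one_mul]
  -- the power series of g at 0
  set p : FormalMultilinearSeries ℂ ℂ ℂ :=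
    FormalMultilinearSeries.ofScalars ℂ (fun k => a k / (k.factorial : ℂ)) with hp
  have hpsum : ∀ y : ℂ, HasSum (fun k => p k fun _ => y) (g y) := by
    intro y
    have h1 := (hconv y).hasSum
    have h2 : ∀ k : ℕ, (p k fun _ => y) = a k * y ^ k / (k.factorial : ℂ) := by
      intro k
      rw [hp, FormalMultilinearSeries.ofScalars_apply_eq, smul_eq_mul, mul_div_right_comm]
    simpa only [h2] using h1
  have hpnorm : ∀ r : ℝ, 0 ≤ r → Summable fun k => ‖a k / (k.factorial : ℂ)‖ * r ^ k := by
    intro r h0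
    have hR : Summable fun k => (a k / (k.factorial : ℂ)) * ((r + 1 : ℝ) : ℂ) ^ k := by
      refine (hconv ((r + 1 : ℝ) : ℂ)).congr fun k => ?_
      rw [mul_div_right_comm]
    exact summable_norm_mul_pow hR h0 (by linarith)
  have hprad : p.radius = ⊤ := by
    apply FormalMultilinearSeries.radius_eq_top_of_summable_norm
    intro r
    refine ((hpnorm r r.coe_nonneg).congr fun k => ?_)
    rw [hp, FormalMultilinearSeries.ofScalars_norm]
  have hgf : HasFPowerSeriesOnBall g p 0 ⊤ :=
    ⟨by rw [hprad], ENNReal.zero_lt_top, fun hy => by simpa using hpsum _⟩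
  have hgdiff : Differentiable ℂ g := by
    have h := hgf.differentiableOn
    intro z
    have hz : z ∈ Metric.eball (0 : ℂ) ⊤ := by simp [Metric.mem_eball, edist_lt_top]
    exact (h.differentiableAt (by simp [Metric.isOpen_eball.mem_nhds hz] : Metric.eball (0:ℂ) ⊤ ∈ nhds z))
  have hfdiff : Differentiable ℂ f := by
    have hfeq : f = fun z => Complex.exp (-z) * g z := funext hf
    rw [hfeq]
    exact (Complex.differentiable_exp.comp differentiable_neg).mul hgdiff
  -- Taylor coefficients of f at n
  set c : ℕ → ℂ := fun j => iteratedDeriv j f (n : ℂ) / (j.factorial : ℂ) with hcdef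
  have hc : ∀ z : ℂ, HasSum (fun j => c j * (z - (n : ℂ)) ^ j) (f z) := by
    intro z
    have h := Complex.hasSum_taylorSeries_of_entire hfdiff (n : ℂ) z
    refine h.congr_fun fun j => ?_
    simp only [smul_eq_mul, div_eq_mul_inv]
    ring
  have hcsum : ∀ r : ℝ, 0 ≤ r → Summable fun j => ‖c j‖ * r ^ j := by
    intro r h0
    have hR : Summable fun j => c j * ((r + 1 : ℝ) : ℂ) ^ j := by
      have := (hc ((n : ℂ) + ((r + 1 : ℝ) : ℂ))).summable
      simpa using this
    exact summable_norm_mul_pow hR h0 (by linarith)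
  -- dominating double family
  have hDom : ∀ r : ℝ, 0 ≤ r →
      Summable (fun jk : ℕ × ℕ => ‖c jk.1‖ * (dnorm n jk.1 jk.2 * r ^ jk.2)) := by
    intro r h0
    rw [summable_prod_of_nonneg (fun jk => by
      have := dnorm_nonneg n jk.1 jk.2
      positivity)]
    constructor
    · intro j
      exact ((hasSum_dnorm n j r).summable).mul_left ‖c j‖
    · have hrow : ∀ j : ℕ, ∑' k, ‖c j‖ * (dnorm n j k * r ^ k)
          = ‖c j‖ * ((r + (n : ℝ)) ^ j * Real.exp r) := by
        intro j
        exact ((hasSum_dnorm n j r).mul_left ‖c j‖).tsum_eq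
      rw [funext hrow]
      have h1 : Summable fun j => (‖c j‖ * (r + (n : ℝ)) ^ j) * Real.exp r :=
        (hcsum (r + n) (by positivity)).mul_right _
      exact h1.congr fun j => by ring
  -- column sums
  have hcolnorm : ∀ k : ℕ, Summable fun j => ‖c j * dcoef n j k‖ := by
    intro k
    refine Summable.of_nonneg_of_le (fun j => norm_nonneg _) (fun j => ?_)
      (hcsum ((n : ℝ) + 1) (by positivity))
    rw [norm_mul]
    exact mul_le_mul_of_nonneg_left (norm_dcoef_le' n j k) (norm_nonneg _)
  have hcolsummable : ∀ k : ℕ, Summable fun j => c j * dcoef n j k := fun k =>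
    (hcolnorm k).of_norm
  set b : ℕ → ℂ := fun k => ∑' j, c j * dcoef n j k with hbdef
  have hbk : ∀ k, HasSum (fun j => c j * dcoef n j k) (b k) := fun k =>
    (hcolsummable k).hasSum
  -- the key Fubini step
  have key : ∀ y : ℂ, HasSum (fun k => b k * y ^ k) (g y) := by
    intro y
    set t : ℕ × ℕ → ℂ := fun jk => c jk.1 * dcoef n jk.1 jk.2 * y ^ jk.2 with htdef
    have ht_norm : Summable fun jk : ℕ × ℕ => ‖t jk‖ := by
      refine Summable.of_nonneg_of_le (fun jk => norm_nonneg _) (fun jk => ?_)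
        (hDom ‖y‖ (norm_nonneg _))
      rw [norm_mul, norm_mul, norm_pow]
      have h1 : ‖c jk.1‖ * ‖dcoef n jk.1 jk.2‖ * ‖y‖ ^ jk.2
          ≤ ‖c jk.1‖ * dnorm n jk.1 jk.2 * ‖y‖ ^ jk.2 := by
        apply mul_le_mul_of_nonneg_right _ (by positivity)
        exact mul_le_mul_of_nonneg_left (norm_dcoef_le n jk.1 jk.2) (norm_nonneg _)
      calc ‖c jk.1‖ * ‖dcoef n jk.1 jk.2‖ * ‖y‖ ^ jk.2
          ≤ ‖c jk.1‖ * dnorm n jk.1 jk.2 * ‖y‖ ^ jk.2 := h1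
        _ = ‖c jk.1‖ * (dnorm n jk.1 jk.2 * ‖y‖ ^ jk.2) := by ring
    have ht : Summable t := ht_norm.of_norm
    obtain ⟨T, hT⟩ := ht
    have hfib : ∀ j : ℕ, HasSum (fun k => t (j, k))
        (c j * ((y - (n : ℂ)) ^ j * Complex.exp y)) := by
      intro j
      have := (hasSum_dcoef n j y).mul_left (c j)
      refine this.congr_fun fun k => ?_
      simp only [htdef]
      ring
    have hrowsum : HasSum (fun j => c j * ((y - (n : ℂ)) ^ j * Complex.exp y)) T :=
      hT.prod_fiberwise hfib
    have halt : HasSum (fun j => c j * ((y - (n : ℂ)) ^ j * Complex.exp y))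
        (g y) := by
      have h := (hc y).mul_right (Complex.exp y)
      have h2 : g y = f y * Complex.exp y := by rw [hfg y]; ring
      rw [h2]
      exact h.congr_fun fun j => by ring
    have hTg : T = g y := hrowsum.unique halt
    have hswap : HasSum (fun kj : ℕ × ℕ => t (kj.2, kj.1)) T := by
      have := (Equiv.prodComm ℕ ℕ).hasSum_iff.mpr hT
      exact this
    have hcol : ∀ k : ℕ, HasSum (fun j => t (j, k)) (b k * y ^ k) := by
      intro k
      have := (hbk k).mul_right (y ^ k)
      exact this
    have := hswap.prod_fiberwise hcol
    rwa [hTg] at this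
  -- the power series of g at 0 with coefficients b
  set q : FormalMultilinearSeries ℂ ℂ ℂ := FormalMultilinearSeries.ofScalars ℂ b with hq
  have hqnorm : ∀ r : ℝ, 0 ≤ r → Summable fun k => ‖b k‖ * r ^ k := by
    intro r h0
    have hswapDom : Summable fun kj : ℕ × ℕ => ‖c kj.2‖ * (dnorm n kj.2 kj.1 * r ^ kj.1) :=
      (Equiv.prodComm ℕ ℕ).summable_iff.mpr (hDom r h0)
    have hmarg : Summable fun k => ∑' j, ‖c j‖ * (dnorm n j k * r ^ k) :=
      (hswapDom.hasSum.prod_fiberwise fun k => (hswapDom.prod_factor k).hasSum).summable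
    refine Summable.of_nonneg_of_le (fun k => by positivity) (fun k => ?_) hmarg
    have h1 : ‖b k‖ ≤ ∑' j, ‖c j * dcoef n j k‖ := norm_tsum_le_tsum_norm (hcolnorm k)
    have h2 : ‖b k‖ * r ^ k ≤ (∑' j, ‖c j * dcoef n j k‖) * r ^ k :=
      mul_le_mul_of_nonneg_right h1 (by positivity)
    refine h2.trans ?_
    rw [← tsum_mul_right]
    refine ((hcolnorm k).mul_right _).tsum_le_tsum (fun j => ?_) (hswapDom.prod_factor k)
    rw [norm_mul]
    have h3 : ‖dcoef n j k‖ * r ^ k ≤ dnorm n j k * r ^ k :=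
      mul_le_mul_of_nonneg_right (norm_dcoef_le n j k) (by positivity)
    calc ‖c j‖ * ‖dcoef n j k‖ * r ^ k = ‖c j‖ * (‖dcoef n j k‖ * r ^ k) := by ring
      _ ≤ ‖c j‖ * (dnorm n j k * r ^ k) :=
          mul_le_mul_of_nonneg_left h3 (norm_nonneg _)
  have hqrad : q.radius = ⊤ := by
    apply FormalMultilinearSeries.radius_eq_top_of_summable_norm
    intro r
    refine ((hqnorm r r.coe_nonneg).congr fun k => ?_)
    rw [hq, FormalMultilinearSeries.ofScalars_norm]
  have hqf : HasFPowerSeriesOnBall g q 0 ⊤ := by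
    refine ⟨by rw [hqrad], ENNReal.zero_lt_top, fun hy => ?_⟩
    rename_i y
    have h2 : ∀ k : ℕ, (q k fun _ => y) = b k * y ^ k := fun k => by
      rw [hq, FormalMultilinearSeries.ofScalars_apply_eq, smul_eq_mul]
    rw [zero_add]
    exact (key y).congr_fun fun k => (h2 k)
  -- uniqueness of power series
  have hpq : p = q := hgf.hasFPowerSeriesAt.eq_formalMultilinearSeries hqf.hasFPowerSeriesAt
  have hab : (fun k => a k / (k.factorial : ℂ)) = b :=
    FormalMultilinearSeries.ofScalars_series_injective (𝕜 := ℂ) (E := ℂ) hpq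
  have hbn : a n / (n.factorial : ℂ) = b n := congrFun hab n
  -- conclusion
  have hfacne : ((n.factorial : ℂ)) ≠ 0 := by
    exact_mod_cast Nat.factorial_ne_zero n
  have h2 := (hbk n).mul_left ((n.factorial : ℂ))
  rw [← hbn, mul_comm, div_mul_cancel₀ _ hfacne] at h2
  refine h2.congr_fun fun j => ?_
  have htau : tau j n = (n.factorial : ℂ) * dcoef n j n :=
    tau_eq_dcoef j n tau (by rw [tau])
  simp only [hcdef]
  rw [htau]
  ring
end

section
/- For x > 0 with x ≠ 1 and 0 < Re(ω) < 3, the integral φ(ω;x) := ∫_0^∞ s^{ω-1}/((s+1)(s+x)²) ds equals π(1 + x^{ω-2}((ω-2)x + 1-ω))/((x-1)² sin(πω)); for x = 1 it equals π(ω-1)(ω-2)/(2 sin(πω)). -/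
open MeasureTheory Set

namespace PhiAux

lemma himg : (fun u : ℝ => u / (1 - u)) '' Ioo 0 1 = Ioi 0 := by
  ext y; constructor
  · rintro ⟨u, ⟨hu0, hu1⟩, rfl⟩
    exact div_pos hu0 (by linarith)
  · intro hy
    simp only [mem_Ioi] at hy
    refine ⟨y / (1 + y), ⟨div_pos hy (by linarith), by rw [div_lt_one (by linarith)]; linarith⟩, ?_⟩
    have h1 : (1 : ℝ) + y ≠ 0 := by linarith
    field_simp
    ring

lemma hderiv : ∀ u ∈ Ioo (0:ℝ) 1,
    HasDerivWithinAt (fun u : ℝ => u / (1 - u)) (((1 - u) ^ 2)⁻¹) (Ioo 0 1) u := by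
  intro u ⟨hu0, hu1⟩
  have h : (1:ℝ) - u ≠ 0 := by linarith
  have := ((hasDerivAt_id u).fun_div ((hasDerivAt_const u (1:ℝ)).fun_sub (hasDerivAt_id u)) h)
  refine this.hasDerivWithinAt.congr_deriv ?_
  simp only [id]
  field_simp
  ring

lemma hinj : InjOn (fun u : ℝ => u / (1 - u)) (Ioo 0 1) := by
  intro a ⟨ha0, ha1⟩ b ⟨hb0, hb1⟩ hab
  have ha : (1:ℝ) - a ≠ 0 := by linarith
  have hb : (1:ℝ) - b ≠ 0 := by linarith
  simp only [div_eq_div_iff ha hb] at hab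
  nlinarith [hab]

lemma beta3 {ω : ℂ} (h0 : 0 < ω.re) (h3 : ω.re < 3) :
    (∫ s in Ioi (0:ℝ), (s:ℂ) ^ (ω - 1) / (1 + (s:ℂ)) ^ 3)
      = Complex.Gamma ω * Complex.Gamma (3 - ω) / 2 := by
  have h3ω : 0 < (3 - ω).re := by
    simp only [Complex.sub_re, Complex.re_ofNat]; linarith
  have key : (∫ s in Ioi (0:ℝ), (s:ℂ) ^ (ω - 1) / (1 + (s:ℂ)) ^ 3)
      = Complex.betaIntegral ω (3 - ω) := by
    rw [← himg, integral_image_eq_integral_abs_deriv_smul measurableSet_Ioo hderiv hinj]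
    rw [Complex.betaIntegral, intervalIntegral.integral_of_le zero_le_one,
      integral_Ioc_eq_integral_Ioo]
    refine setIntegral_congr_fun measurableSet_Ioo (fun u hu => ?_)
    obtain ⟨hu0, hu1⟩ := hu
    have h1u : (0:ℝ) < 1 - u := by linarith
    have hc : ((1 - u : ℝ) : ℂ) ≠ 0 := by
      simp only [ne_eq, Complex.ofReal_eq_zero]; linarith
    have harg : ((1 - u : ℝ) : ℂ).arg ≠ Real.pi := by
      rw [Complex.arg_ofReal_of_nonneg h1u.le]; exact Real.pi_ne_zero.symm
    have hfu : (u / (1 - u) : ℝ) = u * (1 - u)⁻¹ := by ring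
    have h1fu : (1 : ℝ) + u / (1 - u) = (1 - u)⁻¹ := by field_simp; ring
    have e1 : (1 + ((u / (1 - u) : ℝ) : ℂ)) = (((1 - u)⁻¹ : ℝ) : ℂ) := by
      rw [← h1fu]; push_cast; ring
    have e2 : ((u / (1 - u) : ℝ) : ℂ) ^ (ω - 1)
        = (u : ℂ) ^ (ω - 1) * (((1 - u : ℝ) : ℂ) ^ (ω - 1))⁻¹ := by
      rw [hfu, Complex.ofReal_mul, Complex.mul_cpow_ofReal_nonneg hu0.le (inv_nonneg.mpr h1u.le),
        Complex.ofReal_inv, Complex.inv_cpow _ _ harg]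
    simp only [smul_eq_mul, e1, e2, Complex.real_smul]
    rw [abs_of_pos (by positivity : (0:ℝ) < ((1-u)^2)⁻¹)]
    push_cast at hc ⊢
    have hne : ((1:ℂ) - (u:ℂ)) ^ (ω - 1) ≠ 0 := by
      simp [Complex.cpow_eq_zero_iff, hc]
    have e4 : ((1:ℂ) - (u:ℂ)) ^ (3 - ω - 1)
        = ((1:ℂ) - (u:ℂ)) * (((1:ℂ) - (u:ℂ)) ^ (ω - 1))⁻¹ := by
      rw [show (3 - ω - 1 : ℂ) = 1 - (ω - 1) by ring, Complex.cpow_sub _ _ hc,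
        Complex.cpow_one, div_eq_mul_inv]
    rw [e4]
    field_simp
  rw [key]
  have hG := Complex.Gamma_mul_Gamma_eq_betaIntegral h0 h3ω
  rw [show ω + (3 - ω) = 3 by ring] at hG
  have hG3 : Complex.Gamma 3 = 2 := by
    rw [show (3:ℂ) = (2:ℕ) + 1 by norm_num, Complex.Gamma_nat_eq_factorial]
    norm_num
  rw [hG3] at hG
  rw [eq_div_iff (two_ne_zero), hG]
  ring

lemma contOn_slice {σ t : ℝ} (ht : 0 < t) :
    ContinuousOn (fun s : ℝ => s ^ (σ - 1) / (s + t) ^ 3) (Ioi 0) := by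
  intro s hs
  have hs0 : (0:ℝ) < s := hs
  have h1 : ContinuousAt (fun s : ℝ => s ^ (σ - 1)) s :=
    Real.continuousAt_rpow_const s _ (Or.inl hs0.ne')
  have h2 : ContinuousAt (fun s : ℝ => (s + t) ^ 3) s := by fun_prop
  have hst : (0:ℝ) < s + t := by linarith
  exact (h1.div h2 (by positivity)).continuousWithinAt

lemma integrable_slice {σ : ℝ} (h0 : 0 < σ) (h3 : σ < 3) {t : ℝ} (ht : 0 < t) :
    IntegrableOn (fun s : ℝ => s ^ (σ - 1) / (s + t) ^ 3) (Ioi 0) := by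
  have hmeas : ∀ u : Set ℝ, u ⊆ Ioi 0 → MeasurableSet u →
      AEStronglyMeasurable (fun s : ℝ => s ^ (σ - 1) / (s + t) ^ 3) (volume.restrict u) :=
    fun u hu hmu => ((contOn_slice ht).mono hu).aestronglyMeasurable hmu
  rw [show Ioi (0:ℝ) = Ioc 0 1 ∪ Ioi 1 from (Ioc_union_Ioi_eq_Ioi zero_le_one).symm]
  apply IntegrableOn.union
  · have hg : IntegrableOn (fun s : ℝ => s ^ (σ - 1) * (t ^ 3)⁻¹) (Ioc 0 1) := by
      apply Integrable.mul_const
      have h := intervalIntegral.intervalIntegrable_rpow'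
        (show (-1:ℝ) < σ - 1 by linarith) (a := 0) (b := 1)
      rwa [intervalIntegrable_iff_integrableOn_Ioc_of_le zero_le_one] at h
    refine Integrable.mono' hg (hmeas _ Ioc_subset_Ioi_self measurableSet_Ioc) ?_
    filter_upwards [ae_restrict_mem measurableSet_Ioc] with s hs
    have hs0 : 0 < s := hs.1
    rw [Real.norm_eq_abs, abs_of_nonneg (by positivity), div_eq_mul_inv]
    have hle : t ^ 3 ≤ (s + t) ^ 3 := by
      apply pow_le_pow_left₀ ht.le (by linarith)
    exact mul_le_mul_of_nonneg_left (by
      apply inv_anti₀ (by positivity) hle) (by positivity)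
  · have hg : IntegrableOn (fun s : ℝ => s ^ (σ - 4)) (Ioi 1) :=
      integrableOn_Ioi_rpow_of_lt (by linarith) zero_lt_one
    refine Integrable.mono' hg (hmeas _ (fun s hs => mem_Ioi.mpr (lt_trans zero_lt_one hs)) measurableSet_Ioi) ?_
    filter_upwards [ae_restrict_mem measurableSet_Ioi] with s hs
    have hs1 : (1:ℝ) < s := hs
    have hs0 : (0:ℝ) < s := by linarith
    rw [Real.norm_eq_abs, abs_of_nonneg (by positivity)]
    have he : s ^ (σ - 4) = s ^ (σ - 1) / s ^ (3:ℕ) := by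
      rw [eq_div_iff (by positivity), ← Real.rpow_natCast s 3, ← Real.rpow_add hs0]
      congr 1
      ring
    rw [he]
    apply div_le_div_of_nonneg_left (by positivity) (by positivity)
    apply pow_le_pow_left₀ hs0.le (by linarith)

lemma contOn_slice_c {ω : ℂ} {t : ℝ} (ht : 0 < t) :
    ContinuousOn (fun s : ℝ => (s:ℂ) ^ (ω - 1) / ((s:ℂ) + (t:ℂ)) ^ 3) (Ioi 0) := by
  intro s hs
  have hs0 : (0:ℝ) < s := hs
  have h1 : ContinuousAt (fun s : ℝ => (s:ℂ) ^ (ω - 1)) s :=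
    Complex.continuousAt_ofReal_cpow_const s _ (Or.inr hs0.ne')
  have h2 : ContinuousAt (fun s : ℝ => ((s:ℂ) + (t:ℂ)) ^ 3) s := by fun_prop
  have hst : (0:ℝ) < s + t := by linarith
  have hne : ((s:ℂ) + (t:ℂ)) ^ 3 ≠ 0 := by
    apply pow_ne_zero
    rw [show (s:ℂ) + (t:ℂ) = ((s+t:ℝ):ℂ) by push_cast; ring]
    exact Complex.ofReal_ne_zero.mpr hst.ne'
  exact (h1.div h2 hne).continuousWithinAt

lemma integrable_slice_c {ω : ℂ} (h0 : 0 < ω.re) (h3 : ω.re < 3) {t : ℝ} (ht : 0 < t) :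
    IntegrableOn (fun s : ℝ => (s:ℂ) ^ (ω - 1) / ((s:ℂ) + (t:ℂ)) ^ 3) (Ioi 0) := by
  refine Integrable.mono' (integrable_slice h0 h3 ht)
    ((contOn_slice_c ht).aestronglyMeasurable measurableSet_Ioi) ?_
  filter_upwards [ae_restrict_mem measurableSet_Ioi] with s hs
  have hs0 : (0:ℝ) < s := hs
  have hst : (0:ℝ) < s + t := by linarith
  rw [norm_div]
  have e1 : ‖(s:ℂ) ^ (ω - 1)‖ = s ^ (ω.re - 1) := by
    rw [Complex.norm_cpow_eq_rpow_re_of_pos hs0]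
    norm_num [Complex.sub_re]
  have e2 : ‖((s:ℂ) + (t:ℂ)) ^ 3‖ = (s + t) ^ 3 := by
    rw [show (s:ℂ) + (t:ℂ) = ((s+t:ℝ):ℂ) by push_cast; ring, norm_pow,
      Complex.norm_real, Real.norm_eq_abs, abs_of_pos hst]
  rw [e1, e2]

lemma Kreal (σ : ℝ) {t : ℝ} (ht : 0 < t) :
    (∫ s in Ioi (0:ℝ), s ^ (σ - 1) / (s + t) ^ 3)
      = t ^ (σ - 3) * ∫ s in Ioi (0:ℝ), s ^ (σ - 1) / (1 + s) ^ 3 := by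
  have h := MeasureTheory.integral_comp_mul_left_Ioi
    (fun s : ℝ => s ^ (σ - 1) / (s + t) ^ 3) 0 ht
  rw [mul_zero] at h
  have h2 : (∫ x in Ioi (0:ℝ), (t * x) ^ (σ - 1) / ((t * x) + t) ^ 3)
      = (t ^ (σ - 1) / t ^ (3:ℕ)) * ∫ x in Ioi (0:ℝ), x ^ (σ - 1) / (1 + x) ^ 3 := by
    rw [← integral_const_mul]
    refine setIntegral_congr_fun measurableSet_Ioi (fun u hu => ?_)
    have hu0 : (0:ℝ) < u := hu
    have h1u : (0:ℝ) < 1 + u := by linarith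
    rw [Real.mul_rpow ht.le hu0.le, show t * u + t = t * (1 + u) by ring, mul_pow]
    field_simp
  rw [h2, smul_eq_mul] at h
  have e : t * (t ^ (σ - 1) / t ^ (3:ℕ)) = t ^ (σ - 3) := by
    have h3' : t ^ (3:ℕ) = t ^ ((3:ℝ)) := by
      rw [← Real.rpow_natCast t 3]; norm_num
    calc t * (t ^ (σ - 1) / t ^ (3:ℕ))
        = t ^ (1:ℝ) * t ^ (σ - 1) * (t ^ ((3:ℝ)))⁻¹ := by rw [Real.rpow_one, h3']; ring
      _ = t ^ (1 + (σ - 1) + -3) := by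
          rw [← Real.rpow_neg ht.le, ← Real.rpow_add ht, ← Real.rpow_add ht]
      _ = t ^ (σ - 3) := by ring_nf
  have := congrArg (fun z => t * z) h
  simp only [← mul_assoc, mul_inv_cancel₀ ht.ne', one_mul] at this
  rw [← this, e]

lemma Kc {ω : ℂ} (h0 : 0 < ω.re) (h3 : ω.re < 3) {t : ℝ} (ht : 0 < t) :
    (∫ s in Ioi (0:ℝ), (s:ℂ) ^ (ω - 1) / ((s:ℂ) + (t:ℂ)) ^ 3)
      = (t:ℂ) ^ (ω - 3) * (Complex.Gamma ω * Complex.Gamma (3 - ω) / 2) := by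
  have htc : (t:ℂ) ≠ 0 := Complex.ofReal_ne_zero.mpr ht.ne'
  have h := MeasureTheory.integral_comp_mul_left_Ioi
    (fun s : ℝ => (s:ℂ) ^ (ω - 1) / ((s:ℂ) + (t:ℂ)) ^ 3) 0 ht
  rw [mul_zero] at h
  have h2 : (∫ x in Ioi (0:ℝ), ((t * x : ℝ):ℂ) ^ (ω - 1) / (((t * x : ℝ):ℂ) + (t:ℂ)) ^ 3)
      = ((t:ℂ) ^ (ω - 1) / (t:ℂ) ^ (3:ℕ)) * ∫ x in Ioi (0:ℝ), (x:ℂ) ^ (ω - 1) / (1 + (x:ℂ)) ^ 3 := by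
    rw [← integral_const_mul]
    refine setIntegral_congr_fun measurableSet_Ioi (fun u hu => ?_)
    have hu0 : (0:ℝ) < u := hu
    have h1u : ((1:ℂ) + (u:ℂ)) ^ 3 ≠ 0 := by
      have h' : (0:ℝ) < 1 + u := by linarith
      apply pow_ne_zero
      rw [show (1:ℂ) + (u:ℂ) = ((1+u:ℝ):ℂ) by push_cast; ring]
      exact Complex.ofReal_ne_zero.mpr h'.ne'
    rw [Complex.ofReal_mul, Complex.mul_cpow_ofReal_nonneg ht.le hu0.le,
      show (t:ℂ) * (u:ℂ) + (t:ℂ) = (t:ℂ) * (1 + (u:ℂ)) by ring, mul_pow]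
    field_simp
  rw [h2, Complex.real_smul, Complex.ofReal_inv] at h
  have e : (t:ℂ) * ((t:ℂ) ^ (ω - 1) / (t:ℂ) ^ (3:ℕ)) = (t:ℂ) ^ (ω - 3) := by
    have h3' : (t:ℂ) ^ (3:ℕ) = (t:ℂ) ^ ((3:ℂ)) := by
      rw [← Complex.cpow_natCast]; norm_num
    calc (t:ℂ) * ((t:ℂ) ^ (ω - 1) / (t:ℂ) ^ (3:ℕ))
        = (t:ℂ) ^ (1:ℂ) * (t:ℂ) ^ (ω - 1) * ((t:ℂ) ^ ((3:ℂ)))⁻¹ := by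
          rw [Complex.cpow_one, h3']; ring
      _ = (t:ℂ) ^ (1 + (ω - 1) + -(3:ℂ)) := by
          rw [Complex.cpow_add _ _ htc, Complex.cpow_add _ _ htc, Complex.cpow_neg]
      _ = (t:ℂ) ^ (ω - 3) := by ring_nf
  have := congrArg (fun z => (t:ℂ) * z) h
  simp only [← mul_assoc, mul_inv_cancel₀ htc, one_mul] at this
  rw [← this, e, beta3 h0 h3]



lemma ftc_inner {x s : ℝ} (hx : 0 < x) (hs : 0 < s) :
    ∫ t in x..(1:ℝ), 2 * (1 - t) / (s + t) ^ 3 = (x - 1) ^ 2 / ((s + 1) * (s + x) ^ 2) := by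
  have hmin : (0:ℝ) < min x 1 := lt_min hx zero_lt_one
  have hpos : ∀ t ∈ uIcc x 1, 0 < s + t := by
    intro t ht
    have h1 := ht.1
    rw [uIcc] at ht
    have := ht.1
    linarith
  have hd : ∀ t ∈ uIcc x 1, HasDerivAt (fun t : ℝ => (s + t)⁻¹ - (1 - t) * ((s + t) ^ 2)⁻¹)
      (2 * (1 - t) / (s + t) ^ 3) t := by
    intro t ht
    have hst : 0 < s + t := hpos t ht
    have h1 : HasDerivAt (fun t : ℝ => s + t) 1 t := by
      simpa using (hasDerivAt_id t).const_add s
    have h2 : HasDerivAt (fun t : ℝ => (s + t)⁻¹) (-1 / (s + t) ^ 2) t := by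
      simpa using h1.fun_inv hst.ne'
    have h3 : HasDerivAt (fun t : ℝ => (s + t) ^ 2) (2 * (s + t)) t := by
      have := h1.fun_pow 2; simpa using this
    have h4 : HasDerivAt (fun t : ℝ => ((s + t) ^ 2)⁻¹) (-(2 * (s + t)) / ((s + t) ^ 2) ^ 2) t :=
      h3.inv (by positivity)
    have h5 : HasDerivAt (fun t : ℝ => (1 - t)) (-1) t := by
      simpa using (hasDerivAt_id t).const_sub 1
    have h6 := h5.fun_mul h4
    have h7 := h2.fun_sub h6
    refine h7.congr_deriv ?_
    field_simp
    ring
  have hint : IntervalIntegrable (fun t : ℝ => 2 * (1 - t) / (s + t) ^ 3) volume x 1 := by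
    apply ContinuousOn.intervalIntegrable
    intro t ht
    have hst := hpos t ht
    exact (ContinuousAt.div (by fun_prop) (by fun_prop) (by positivity)).continuousWithinAt
  rw [intervalIntegral.integral_eq_sub_of_hasDerivAt hd hint]
  have h1 : (0:ℝ) < s + 1 := by linarith
  have h2 : (0:ℝ) < s + x := by linarith
  field_simp
  ring

lemma ftc_outer {ω : ℂ} (hω1 : ω ≠ 1) (hω2 : ω ≠ 2) {x : ℝ} (hx : 0 < x) :
    (∫ t in x..(1:ℝ), ((2 * (1 - t) : ℝ) : ℂ) * (t:ℂ) ^ (ω - 3))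
      = (2 / (ω - 2) - 2 / (ω - 1))
        - (2 * (x:ℂ) ^ (ω - 2) / (ω - 2) - 2 * (x:ℂ) ^ (ω - 1) / (ω - 1)) := by
  have hmin : (0:ℝ) < min x 1 := lt_min hx zero_lt_one
  have hpos : ∀ t ∈ uIcc x 1, 0 < t := by
    intro t ht
    rw [uIcc] at ht
    have := ht.1
    linarith
  have hne2 : ω - 3 ≠ -1 := by
    intro h; apply hω2; linear_combination h
  have hne1 : ω - 2 ≠ -1 := by
    intro h; apply hω1; linear_combination h
  have hd : ∀ t ∈ uIcc x 1, HasDerivAt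
      (fun t : ℝ => 2 * ((t:ℂ) ^ (ω - 2) / (ω - 2)) - 2 * ((t:ℂ) ^ (ω - 1) / (ω - 1)))
      (((2 * (1 - t) : ℝ) : ℂ) * (t:ℂ) ^ (ω - 3)) t := by
    intro t ht
    have ht0 : (0:ℝ) < t := hpos t ht
    have hA := hasDerivAt_ofReal_cpow_const' ht0.ne' hne2
    have hB := hasDerivAt_ofReal_cpow_const' ht0.ne' hne1
    simp only [show ω - 3 + 1 = ω - 2 by ring] at hA
    simp only [show ω - 2 + 1 = ω - 1 by ring] at hB
    have hE := (hA.const_mul (2:ℂ)).fun_sub (hB.const_mul (2:ℂ))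
    refine hE.congr_deriv ?_
    have htc : (t:ℂ) ≠ 0 := Complex.ofReal_ne_zero.mpr ht0.ne'
    have : (t:ℂ) ^ (ω - 2) = (t:ℂ) ^ (ω - 3) * (t:ℂ) := by
      rw [show ω - 2 = (ω - 3) + 1 by ring, Complex.cpow_add _ _ htc, Complex.cpow_one]
    rw [this]
    push_cast
    ring
  have hint : IntervalIntegrable (fun t : ℝ => ((2 * (1 - t) : ℝ) : ℂ) * (t:ℂ) ^ (ω - 3))
      volume x 1 := by
    apply ContinuousOn.intervalIntegrable
    intro t ht
    have ht0 : (0:ℝ) < t := hpos t ht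
    have c1 : ContinuousAt (fun t : ℝ => ((2 * (1 - t) : ℝ) : ℂ)) t := by fun_prop
    have c2 : ContinuousAt (fun t : ℝ => (t:ℂ) ^ (ω - 3)) t :=
      Complex.continuousAt_ofReal_cpow_const t _ (Or.inr ht0.ne')
    exact (c1.mul c2).continuousWithinAt
  rw [intervalIntegral.integral_eq_sub_of_hasDerivAt hd hint]
  rw [Complex.ofReal_one, Complex.one_cpow, Complex.one_cpow]
  ring

lemma refl3 {ω : ℂ} (hω1 : ω ≠ 1) (hω2 : ω ≠ 2) :
    Complex.Gamma ω * Complex.Gamma (3 - ω)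
      = (2 - ω) * (1 - ω) * (Real.pi : ℂ) / Complex.sin ((Real.pi : ℂ) * ω) := by
  have h1 : Complex.Gamma (3 - ω) = (2 - ω) * Complex.Gamma (2 - ω) := by
    rw [show (3:ℂ) - ω = (2 - ω) + 1 by ring, Complex.Gamma_add_one _ (sub_ne_zero.mpr (Ne.symm hω2))]
  have h2 : Complex.Gamma (2 - ω) = (1 - ω) * Complex.Gamma (1 - ω) := by
    rw [show (2:ℂ) - ω = (1 - ω) + 1 by ring, Complex.Gamma_add_one _ (sub_ne_zero.mpr (Ne.symm hω1))]
  rw [h1, h2, show Complex.Gamma ω * ((2 - ω) * ((1 - ω) * Complex.Gamma (1 - ω)))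
    = (2 - ω) * (1 - ω) * (Complex.Gamma ω * Complex.Gamma (1 - ω)) by ring,
    Complex.Gamma_mul_Gamma_one_sub ω]
  ring


lemma fubini_core {ω : ℂ} (h0 : 0 < ω.re) (h3 : ω.re < 3) {a b : ℝ} (ha : 0 < a) (hab : a ≤ b) :
    (∫ s in Ioi (0:ℝ), (s:ℂ) ^ (ω - 1) * ((∫ t in Ioc a b, 2 * (1 - t) / (s + t) ^ 3 : ℝ) : ℂ))
      = ∫ t in Ioc a b, ((2 * (1 - t) : ℝ) : ℂ) *
          ((t:ℂ) ^ (ω - 3) * (Complex.Gamma ω * Complex.Gamma (3 - ω) / 2)) := by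
  set f : ℝ × ℝ → ℂ :=
    fun p => (p.1 : ℂ) ^ (ω - 1) * ((2 * (1 - p.2) / (p.1 + p.2) ^ 3 : ℝ) : ℂ) with hf
  have hmeasset : MeasurableSet (Ioi (0:ℝ) ×ˢ Ioc a b) := measurableSet_Ioi.prod measurableSet_Ioc
  have hcont : ContinuousOn f (Ioi (0:ℝ) ×ˢ Ioc a b) := by
    rintro p ⟨hp1, hp2⟩
    have hp1' : (0:ℝ) < p.1 := hp1
    have hp2' : (0:ℝ) < p.2 := ha.trans hp2.1
    have hst : (0:ℝ) < p.1 + p.2 := by linarith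
    have c1 : ContinuousAt (fun p : ℝ × ℝ => (p.1 : ℂ) ^ (ω - 1)) p := by
      exact (Complex.continuousAt_ofReal_cpow_const p.1 (ω - 1) (Or.inr hp1'.ne')).comp
        continuousAt_fst
    have c2 : ContinuousAt (fun p : ℝ × ℝ => ((2 * (1 - p.2) / (p.1 + p.2) ^ 3 : ℝ) : ℂ)) p := by
      apply Complex.continuous_ofReal.continuousAt.comp
      exact ContinuousAt.div (by fun_prop) (by fun_prop) (by positivity)
    exact (c1.mul c2).continuousWithinAt
  have hmeas : AEStronglyMeasurable f
      ((volume.restrict (Ioi (0:ℝ))).prod (volume.restrict (Ioc a b))) := by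
    rw [Measure.prod_restrict]
    exact hcont.aestronglyMeasurable hmeasset
  have hslice : ∀ t ∈ Ioc a b, Integrable (fun s => f (s, t)) (volume.restrict (Ioi (0:ℝ))) := by
    intro t ht
    have ht0 : (0:ℝ) < t := ha.trans ht.1
    have he : (fun s => f (s, t))
        = fun s : ℝ => ((2 * (1 - t) : ℝ) : ℂ) * ((s:ℂ) ^ (ω - 1) / ((s:ℂ) + (t:ℂ)) ^ 3) := by
      funext s; simp only [hf]; push_cast; ring
    rw [he]
    exact (integrable_slice_c h0 h3 ht0).const_mul _
  have hnormint : Integrable (fun t => ∫ s in Ioi (0:ℝ), ‖f (s, t)‖)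
      (volume.restrict (Ioc a b)) := by
    set Creal := ∫ s in Ioi (0:ℝ), s ^ (ω.re - 1) / (1 + s) ^ 3 with hCreal
    have heq : ∀ t ∈ Ioc a b, (∫ s in Ioi (0:ℝ), ‖f (s, t)‖)
        = (2 * |1 - t|) * (t ^ (ω.re - 3) * Creal) := by
      intro t ht
      have ht0 : (0:ℝ) < t := ha.trans ht.1
      have hpt : ∀ s ∈ Ioi (0:ℝ), ‖f (s, t)‖
          = (2 * |1 - t|) * (s ^ (ω.re - 1) / (s + t) ^ 3) := by
        intro s hs
        have hs0 : (0:ℝ) < s := hs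
        have hst : (0:ℝ) < s + t := by linarith
        simp only [hf, norm_mul, Complex.norm_real, Real.norm_eq_abs]
        rw [Complex.norm_cpow_eq_rpow_re_of_pos hs0,
          show (ω - 1).re = ω.re - 1 by simp [Complex.sub_re]]
        rw [abs_div, abs_mul, abs_of_pos (show (0:ℝ) < (s + t) ^ 3 by positivity),
          abs_two]
        ring
      rw [setIntegral_congr_fun measurableSet_Ioi hpt, integral_const_mul, Kreal ω.re ht0]
    have hcl : IntegrableOn (fun t : ℝ => (2 * |1 - t|) * (t ^ (ω.re - 3) * Creal)) (Ioc a b) := by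
      apply (ContinuousOn.integrableOn_Icc ?_).mono_set Ioc_subset_Icc_self
      intro t ht
      have ht0 : (0:ℝ) < t := lt_of_lt_of_le ha ht.1
      have c1 : ContinuousAt (fun t : ℝ => t ^ (ω.re - 3)) t :=
        Real.continuousAt_rpow_const t _ (Or.inl ht0.ne')
      exact (ContinuousAt.mul (by fun_prop) (c1.mul continuousAt_const)).continuousWithinAt
    apply Integrable.congr hcl
    filter_upwards [ae_restrict_mem measurableSet_Ioc] with t ht
    exact (heq t ht).symm
  have hint : Integrable f ((volume.restrict (Ioi (0:ℝ))).prod (volume.restrict (Ioc a b))) := by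
    refine (integrable_prod_iff' hmeas).mpr ⟨?_, hnormint⟩
    filter_upwards [ae_restrict_mem measurableSet_Ioc] with t ht using hslice t ht
  have hswap := MeasureTheory.integral_integral_swap (f := fun s t => f (s, t)) hint
  have hL : ∀ s : ℝ, (s:ℂ) ^ (ω - 1) * ((∫ t in Ioc a b, 2 * (1 - t) / (s + t) ^ 3 : ℝ) : ℂ)
      = ∫ t in Ioc a b, f (s, t) := by
    intro s
    have hro : (∫ t in Ioc a b, ((2 * (1 - t) / (s + t) ^ 3 : ℝ) : ℂ))
        = ((∫ t in Ioc a b, 2 * (1 - t) / (s + t) ^ 3 : ℝ) : ℂ) := integral_ofReal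
    rw [← hro, ← integral_const_mul]
  have hR : ∀ t ∈ Ioc a b, (∫ s in Ioi (0:ℝ), f (s, t))
      = ((2 * (1 - t) : ℝ) : ℂ) * ((t:ℂ) ^ (ω - 3) * (Complex.Gamma ω * Complex.Gamma (3 - ω) / 2)) := by
    intro t ht
    have ht0 : (0:ℝ) < t := ha.trans ht.1
    have he : (fun s : ℝ => f (s, t))
        = fun s : ℝ => ((2 * (1 - t) : ℝ) : ℂ) * ((s:ℂ) ^ (ω - 1) / ((s:ℂ) + (t:ℂ)) ^ 3) := by
      funext s; simp only [hf]; push_cast; ring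
    rw [he, integral_const_mul, Kc h0 h3 ht0]
  calc (∫ s in Ioi (0:ℝ), (s:ℂ) ^ (ω - 1) * ((∫ t in Ioc a b, 2 * (1 - t) / (s + t) ^ 3 : ℝ) : ℂ))
      = ∫ s in Ioi (0:ℝ), ∫ t in Ioc a b, f (s, t) := by
        exact setIntegral_congr_fun measurableSet_Ioi (fun s _ => hL s)
    _ = ∫ t in Ioc a b, ∫ s in Ioi (0:ℝ), f (s, t) := hswap
    _ = _ := setIntegral_congr_fun measurableSet_Ioc hR


lemma final_algebra {ω : ℂ} (hω1 : ω ≠ 1) (hω2 : ω ≠ 2)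
    (hsin : Complex.sin ((Real.pi : ℂ) * ω) ≠ 0) {x : ℝ} (hx : 0 < x) (hx1 : x ≠ 1) :
    ((((x - 1) ^ 2)⁻¹ : ℝ) : ℂ) * (∫ t in x..(1:ℝ), ((2 * (1 - t) : ℝ) : ℂ) *
        ((t:ℂ) ^ (ω - 3) * (Complex.Gamma ω * Complex.Gamma (3 - ω) / 2)))
      = (Real.pi : ℂ) * (1 + (x : ℂ) ^ (ω - 2) * ((ω - 2) * (x : ℂ) + 1 - ω)) /
          (((x : ℂ) - 1) ^ 2 * Complex.sin ((Real.pi : ℂ) * ω)) := by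
  simp only [← mul_assoc]
  rw [intervalIntegral.integral_mul_const, ftc_outer hω1 hω2 hx, refl3 hω1 hω2]
  have hω1' : ω - 1 ≠ 0 := sub_ne_zero.mpr hω1
  have hω2' : ω - 2 ≠ 0 := sub_ne_zero.mpr hω2
  have hxc : (x:ℂ) ≠ 0 := Complex.ofReal_ne_zero.mpr hx.ne'
  have hx1c : ((x:ℂ) - 1) ≠ 0 := by
    rw [show (x:ℂ) - 1 = ((x - 1 : ℝ):ℂ) by push_cast; ring]
    exact Complex.ofReal_ne_zero.mpr (sub_ne_zero.mpr hx1)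
  have hxpow : (x:ℂ) ^ (ω - 1) = (x:ℂ) ^ (ω - 2) * (x:ℂ) := by
    rw [show ω - 1 = (ω - 2) + 1 by ring, Complex.cpow_add _ _ hxc, Complex.cpow_one]
  rw [hxpow]
  push_cast
  field_simp
  ring

end PhiAux

/-- For x > 0 and 0 < Re(ω) < 3 (with sin(πω) ≠ 0), the integral
φ(ω;x) = ∫_0^∞ s^{ω-1}/((s+1)(s+x)²) ds has the stated closed forms. -/
theorem phi_integral_closed_form (x : ℝ) (hx : 0 < x) (ω : ℂ)
    (h0 : 0 < ω.re) (h3 : ω.re < 3) (hsin : Complex.sin ((Real.pi : ℂ) * ω) ≠ 0) :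
    (x ≠ 1 →
      (∫ s in Set.Ioi (0 : ℝ), (s : ℂ) ^ (ω - 1) / (((s : ℂ) + 1) * ((s : ℂ) + (x : ℂ)) ^ 2)) =
        (Real.pi : ℂ) * (1 + (x : ℂ) ^ (ω - 2) * ((ω - 2) * (x : ℂ) + 1 - ω)) /
          (((x : ℂ) - 1) ^ 2 * Complex.sin ((Real.pi : ℂ) * ω))) ∧
    (x = 1 →
      (∫ s in Set.Ioi (0 : ℝ), (s : ℂ) ^ (ω - 1) / (((s : ℂ) + 1) * ((s : ℂ) + (x : ℂ)) ^ 2)) =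
        (Real.pi : ℂ) * (ω - 1) * (ω - 2) / (2 * Complex.sin ((Real.pi : ℂ) * ω))) := by
  have hω1 : ω ≠ 1 := by
    rintro rfl
    exact hsin (by rw [mul_one, ← Complex.ofReal_sin, Real.sin_pi, Complex.ofReal_zero])
  have hω2 : ω ≠ 2 := by
    rintro rfl
    apply hsin
    rw [show ((Real.pi : ℝ):ℂ) * 2 = ((2 * Real.pi : ℝ):ℂ) by push_cast; ring,
      ← Complex.ofReal_sin, Real.sin_two_pi, Complex.ofReal_zero]
  constructor
  · intro hx1
    have step1 : ∀ s ∈ Set.Ioi (0:ℝ),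
        (s:ℂ) ^ (ω - 1) / (((s:ℂ) + 1) * ((s:ℂ) + (x:ℂ)) ^ 2)
          = ((((x - 1) ^ 2)⁻¹ : ℝ) : ℂ) * ((s:ℂ) ^ (ω - 1) *
              ((∫ t in x..(1:ℝ), 2 * (1 - t) / (s + t) ^ 3 : ℝ) : ℂ)) := by
      intro s hs
      have hs0 : (0:ℝ) < s := hs
      rw [PhiAux.ftc_inner hx hs0]
      have hs1 : ((s:ℂ) + 1) ≠ 0 := by
        rw [show (s:ℂ) + 1 = ((s + 1 : ℝ):ℂ) by push_cast; ring]
        exact Complex.ofReal_ne_zero.mpr (by linarith)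
      have hsx : ((s:ℂ) + (x:ℂ)) ≠ 0 := by
        rw [show (s:ℂ) + (x:ℂ) = ((s + x : ℝ):ℂ) by push_cast; ring]
        exact Complex.ofReal_ne_zero.mpr (by linarith)
      have hx1r : (x:ℝ) - 1 ≠ 0 := sub_ne_zero.mpr hx1
      have hden : (((s:ℂ) + 1) * ((s:ℂ) + (x:ℂ)) ^ 2) = (((s + 1) * (s + x) ^ 2 : ℝ) : ℂ) := by
        push_cast; ring
      have hu : ((x - 1 : ℝ) ^ 2 : ℝ) ≠ 0 := pow_ne_zero _ hx1r
      have hv : ((s + 1) * (s + x) ^ 2 : ℝ) ≠ 0 := by positivity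
      have huC : (((x - 1 : ℝ) ^ 2 : ℝ) : ℂ) ≠ 0 := Complex.ofReal_ne_zero.mpr hu
      have hvC : (((s + 1) * (s + x) ^ 2 : ℝ) : ℂ) ≠ 0 := Complex.ofReal_ne_zero.mpr hv
      rw [hden, Complex.ofReal_div, Complex.ofReal_inv]
      field_simp
    rw [MeasureTheory.setIntegral_congr_fun measurableSet_Ioi step1,
      MeasureTheory.integral_const_mul]
    rcases lt_or_gt_of_ne hx1 with hlt | hgt
    · have hxb : x ≤ 1 := hlt.le
      have he : (fun s : ℝ => (s:ℂ) ^ (ω - 1) *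
            ((∫ t in x..(1:ℝ), 2 * (1 - t) / (s + t) ^ 3 : ℝ) : ℂ))
          = fun s : ℝ => (s:ℂ) ^ (ω - 1) *
            ((∫ t in Set.Ioc x 1, 2 * (1 - t) / (s + t) ^ 3 : ℝ) : ℂ) := by
        funext s; rw [intervalIntegral.integral_of_le hxb]
      rw [he, PhiAux.fubini_core h0 h3 hx hxb, ← intervalIntegral.integral_of_le hxb]
      exact PhiAux.final_algebra hω1 hω2 hsin hx hx1
    · have hxb : (1:ℝ) ≤ x := hgt.le
      have he : (fun s : ℝ => (s:ℂ) ^ (ω - 1) *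
            ((∫ t in x..(1:ℝ), 2 * (1 - t) / (s + t) ^ 3 : ℝ) : ℂ))
          = fun s : ℝ => -((s:ℂ) ^ (ω - 1) *
            ((∫ t in Set.Ioc 1 x, 2 * (1 - t) / (s + t) ^ 3 : ℝ) : ℂ)) := by
        funext s
        rw [intervalIntegral.integral_symm, intervalIntegral.integral_of_le hxb]
        push_cast
        ring
      rw [he, MeasureTheory.integral_neg, PhiAux.fubini_core h0 h3 zero_lt_one hxb,
        ← intervalIntegral.integral_of_le hxb]
      rw [show (∫ t in (1:ℝ)..x, ((2 * (1 - t) : ℝ) : ℂ) *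
            ((t:ℂ) ^ (ω - 3) * (Complex.Gamma ω * Complex.Gamma (3 - ω) / 2)))
          = -(∫ t in x..(1:ℝ), ((2 * (1 - t) : ℝ) : ℂ) *
            ((t:ℂ) ^ (ω - 3) * (Complex.Gamma ω * Complex.Gamma (3 - ω) / 2)))
          from intervalIntegral.integral_symm x 1]
      rw [neg_neg]
      exact PhiAux.final_algebra hω1 hω2 hsin hx hx1
  · intro hx1
    subst hx1
    have he : ∀ s ∈ Set.Ioi (0:ℝ),
        (s:ℂ) ^ (ω - 1) / (((s:ℂ) + 1) * ((s:ℂ) + ((1:ℝ):ℂ)) ^ 2)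
          = (s:ℂ) ^ (ω - 1) / (1 + (s:ℂ)) ^ 3 := by
      intro s _
      push_cast
      ring_nf
    rw [MeasureTheory.setIntegral_congr_fun measurableSet_Ioi he, PhiAux.beta3 h0 h3,
      PhiAux.refl3 hω1 hω2]
    field_simp
    ring
end

section
/- Euler's q-identity: for |q| < 1 and all complex z, ∑_{j≥0} q^{C(j,2)} z^j / ((1-q)(1-q²)⋯(1-q^j)) = ∏_{k≥0} (1 + q^k z), where C(j,2) = j(j-1)/2. -/
open Finset Filter Topology

namespace EulerQAux

noncomputable def a (q : ℂ) (j : ℕ) : ℂ :=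
  q ^ j.choose 2 / ∏ i ∈ Finset.range j, (1 - q ^ (i + 1))

variable {q : ℂ}

lemma one_sub_ne (hq : ‖q‖ < 1) (i : ℕ) : (1 : ℂ) - q ^ (i + 1) ≠ 0 := by
  intro h
  have h1 : ‖q ^ (i + 1)‖ < 1 := by
    rw [norm_pow]; exact pow_lt_one₀ (norm_nonneg q) hq (Nat.succ_ne_zero i)
  rw [sub_eq_zero] at h
  rw [← h] at h1; simp at h1

/-- uniform lower bound for denominators -/
lemma denom_lb (hq : ‖q‖ < 1) :
    ∃ c : ℝ, 0 < c ∧ ∀ j : ℕ, c ≤ ‖∏ i ∈ Finset.range j, (1 - q ^ (i + 1))‖ := by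
  set r := ‖q‖ with hr
  have hr0 : 0 ≤ r := norm_nonneg q
  have hrpow : ∀ i : ℕ, r ^ (i + 1) < 1 := fun i => pow_lt_one₀ hr0 hq (Nat.succ_ne_zero i)
  have hpos : ∀ i : ℕ, 0 < 1 - r ^ (i + 1) := fun i => by linarith [hrpow i]
  set L : ℕ → ℝ := fun i => Real.log (1 - r ^ (i + 1)) with hL
  have hLle : ∀ i, L i ≤ 0 := fun i =>
    Real.log_nonpos (by linarith [hrpow i]) (by nlinarith [pow_nonneg hr0 (i + 1)])
  -- summability of L
  have hsum : Summable L := by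
    have hev : ∀ᶠ n in atTop, ‖L n‖ ≤ 2 * r ^ (n + 1) := by
      have ht : Tendsto (fun n : ℕ => r ^ (n + 1)) atTop (𝓝 0) := by
        have := (tendsto_pow_atTop_nhds_zero_of_lt_one hr0 hq).comp (tendsto_add_atTop_nat 1)
        simpa [Function.comp_def] using this
      filter_upwards [ht.eventually_le_const (by norm_num : (0:ℝ) < 1/2)] with n hn
      set x := r ^ (n + 1) with hx
      have hx0 : 0 ≤ x := pow_nonneg hr0 _
      have h1x : (0:ℝ) < 1 - x := hpos n
      have : ‖L n‖ = -Real.log (1 - x) := by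
        rw [Real.norm_eq_abs, abs_of_nonpos (hLle n)]
      rw [this, ← Real.log_inv]
      have h2 : Real.log (1 - x)⁻¹ ≤ (1 - x)⁻¹ - 1 :=
        Real.log_le_sub_one_of_pos (by positivity)
      have h3 : (1 - x)⁻¹ - 1 ≤ 2 * x := by
        rw [inv_eq_one_div, div_sub' (ne_of_gt h1x), div_le_iff₀ h1x]
        nlinarith
      linarith
    apply Summable.of_norm_bounded_eventually_nat (g := fun n => 2 * r ^ (n + 1)) ?_ hev
    · apply Summable.mul_left
      exact ((summable_geometric_of_lt_one hr0 hq).comp_injective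
        (add_left_injective 1)).congr (by intro n; simp)
  set T := ∑' n, L n with hT
  refine ⟨Real.exp T, Real.exp_pos T, fun j => ?_⟩
  have key : Real.exp T ≤ ∏ i ∈ Finset.range j, (1 - r ^ (i + 1)) := by
    have h1 : ∏ i ∈ Finset.range j, (1 - r ^ (i + 1)) =
        Real.exp (∑ i ∈ Finset.range j, L i) := by
      rw [Real.exp_sum]
      exact (Finset.prod_congr rfl fun i _ => (Real.exp_log (hpos i)).symm)
    rw [h1, Real.exp_le_exp]
    have := Summable.sum_le_tsum (f := fun n => -L n) (Finset.range j)
      (fun i _ => neg_nonneg.2 (hLle i)) hsum.neg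
    have htneg : ∑' n, -L n = -T := by rw [hT, tsum_neg]
    rw [htneg] at this
    simp only [Finset.sum_neg_distrib] at this
    linarith
  refine key.trans ?_
  rw [norm_prod]
  apply Finset.prod_le_prod (fun i _ => le_of_lt (hpos i))
  intro i _
  calc 1 - r ^ (i + 1) = 1 - ‖q ^ (i + 1)‖ := by rw [norm_pow]
    _ ≤ ‖1 - q ^ (i + 1)‖ := by
        have := norm_sub_norm_le (1 : ℂ) (q ^ (i + 1))
        simpa using this

end EulerQAux

namespace EulerQAux

/-- master summability: r^{C(j,2)} t^j is summable -/
lemma summable_master {r t : ℝ} (hr0 : 0 ≤ r) (hr : r < 1) (ht : 0 ≤ t) :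
    Summable (fun j : ℕ => r ^ (j.choose 2) * t ^ j) := by
  apply summable_of_ratio_norm_eventually_le (show (1:ℝ)/2 < 1 by norm_num)
  have hten : Tendsto (fun j : ℕ => r ^ j * t) atTop (𝓝 0) := by
    simpa using (tendsto_pow_atTop_nhds_zero_of_lt_one hr0 hr).mul_const t
  filter_upwards [hten.eventually_le_const (by norm_num : (0:ℝ) < 1/2)] with j hj
  have hchoose : (j + 1).choose 2 = j + j.choose 2 := by
    rw [Nat.choose_succ_succ j 1, Nat.choose_one_right]
  have hterm : r ^ ((j+1).choose 2) * t ^ (j+1) =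
      (r ^ j * t) * (r ^ (j.choose 2) * t ^ j) := by
    rw [hchoose, pow_add, pow_succ]; ring
  rw [Real.norm_eq_abs, Real.norm_eq_abs, hterm,
    abs_of_nonneg (by positivity), abs_of_nonneg (by positivity)]
  have h0 : 0 ≤ r ^ j.choose 2 * t ^ j := by positivity
  nlinarith [mul_nonneg (pow_nonneg hr0 j) ht]

lemma norm_a_le (hq : ‖q‖ < 1) :
    ∃ c : ℝ, 0 < c ∧ ∀ j : ℕ, ‖a q j‖ ≤ (1/c) * ‖q‖ ^ j.choose 2 := by
  obtain ⟨c, hc, hcle⟩ := denom_lb hq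
  refine ⟨c, hc, fun j => ?_⟩
  rw [a, norm_div, norm_pow]
  rw [div_le_iff₀ (lt_of_lt_of_le hc (hcle j))]
  have h1 : (1/c) * ‖q‖ ^ j.choose 2 * ‖∏ i ∈ Finset.range j, (1 - q ^ (i+1))‖
      ≥ (1/c) * ‖q‖ ^ j.choose 2 * c := by
    apply mul_le_mul_of_nonneg_left (hcle j) (by positivity)
  calc ‖q‖ ^ j.choose 2 = (1/c) * ‖q‖ ^ j.choose 2 * c := by field_simp
    _ ≤ _ := h1

lemma summable_norm_term (hq : ‖q‖ < 1) (w : ℂ) :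
    Summable (fun j : ℕ => ‖a q j * w ^ j‖) := by
  obtain ⟨c, hc, hle⟩ := norm_a_le hq
  have hbd : ∀ j : ℕ, ‖a q j * w ^ j‖ ≤ (1/c) * (‖q‖ ^ j.choose 2 * ‖w‖ ^ j) := by
    intro j
    rw [norm_mul, norm_pow]
    calc ‖a q j‖ * ‖w‖ ^ j ≤ ((1/c) * ‖q‖ ^ j.choose 2) * ‖w‖ ^ j :=
          mul_le_mul_of_nonneg_right (hle j) (by positivity)
      _ = (1/c) * (‖q‖ ^ j.choose 2 * ‖w‖ ^ j) := by ring
  exact Summable.of_nonneg_of_le (fun j => norm_nonneg _) hbd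
    (((summable_master (norm_nonneg q) hq (norm_nonneg w)).mul_left _))

lemma summable_term (hq : ‖q‖ < 1) (w : ℂ) :
    Summable (fun j : ℕ => a q j * w ^ j) :=
  (summable_norm_term hq w).of_norm

lemma summable_norm_shift (hq : ‖q‖ < 1) {R : ℝ} (hR : 0 ≤ R) :
    Summable (fun j : ℕ => ‖a q (j + 1)‖ * R ^ j) := by
  obtain ⟨c, hc, hle⟩ := norm_a_le hq
  have hbd : ∀ j : ℕ, ‖a q (j+1)‖ * R ^ j ≤ (1/c) * (‖q‖ ^ j.choose 2 * R ^ j) := by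
    intro j
    have h1 : ‖a q (j+1)‖ ≤ (1/c) * ‖q‖ ^ ((j+1).choose 2) := hle (j+1)
    have h2 : ‖q‖ ^ ((j+1).choose 2) ≤ ‖q‖ ^ j.choose 2 :=
      pow_le_pow_of_le_one (norm_nonneg q) hq.le (Nat.choose_le_choose 2 (Nat.le_succ j))
    calc ‖a q (j+1)‖ * R ^ j ≤ ((1/c) * ‖q‖ ^ j.choose 2) * R ^ j := by
          apply mul_le_mul_of_nonneg_right _ (by positivity)
          exact h1.trans (mul_le_mul_of_nonneg_left h2 (by positivity))
      _ = (1/c) * (‖q‖ ^ j.choose 2 * R ^ j) := by ring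
  exact Summable.of_nonneg_of_le (fun j => by positivity) hbd
    ((summable_master (norm_nonneg q) hq hR).mul_left _)

end EulerQAux

namespace EulerQAux

noncomputable def S (q w : ℂ) : ℂ := ∑' j : ℕ, a q j * w ^ j

lemma a_zero : a q 0 = 1 := by simp [a]

lemma a_rec (hq : ‖q‖ < 1) (n : ℕ) :
    a q (n + 1) * (1 - q ^ (n + 1)) = a q n * q ^ n := by
  have hD : (∏ i ∈ Finset.range (n+1), (1 - q ^ (i+1)))
      = (∏ i ∈ Finset.range n, (1 - q ^ (i+1))) * (1 - q ^ (n+1)) :=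
    Finset.prod_range_succ _ n
  have hne : (1 : ℂ) - q ^ (n+1) ≠ 0 := one_sub_ne hq n
  have hDne : (∏ i ∈ Finset.range n, (1 - q ^ (i+1))) ≠ 0 :=
    Finset.prod_ne_zero_iff.mpr fun i _ => one_sub_ne hq i
  have hchoose : (n + 1).choose 2 = n.choose 2 + n := by
    rw [Nat.choose_succ_succ n 1, Nat.choose_one_right, Nat.add_comm]
  rw [a, a, hD, hchoose, pow_add]
  field_simp

lemma feq (hq : ‖q‖ < 1) (w : ℂ) : S q w = (1 + w) * S q (q * w) := by
  have h1 : HasSum (fun j : ℕ => a q j * w ^ j) (S q w) := (summable_term hq w).hasSum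
  have h2 : HasSum (fun j : ℕ => a q j * (q * w) ^ j) (S q (q * w)) :=
    (summable_term hq (q * w)).hasSum
  set g : ℕ → ℂ := fun j => a q j * w ^ j - a q j * (q * w) ^ j with hg
  have h3 : HasSum g (S q w - S q (q * w)) := h1.sub h2
  have h4 : HasSum (fun j : ℕ => w * (a q j * (q * w) ^ j)) (w * S q (q * w)) :=
    h2.mul_left w
  have hclaim : ∀ n : ℕ, w * (a q n * (q * w) ^ n) = g (n + 1) := by
    intro n
    have e1 : g (n + 1) = (a q (n+1) * (1 - q ^ (n+1))) * w ^ (n+1) := by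
      simp only [hg, mul_pow]; ring
    rw [e1, a_rec hq n, mul_pow]; ring
  rw [show (fun j : ℕ => w * (a q j * (q * w) ^ j)) = fun n : ℕ => g (n + 1) from
    funext hclaim] at h4
  have h7 : HasSum g (w * S q (q * w) + ∑ i ∈ Finset.range 1, g i) :=
    (hasSum_nat_add_iff 1).mp h4
  have h8 : (∑ i ∈ Finset.range 1, g i) = 0 := by simp [hg, a_zero]
  rw [h8, add_zero] at h7
  have h9 := h3.unique h7
  linear_combination h9

lemma iter (hq : ‖q‖ < 1) (z : ℂ) (n : ℕ) :
    S q z = (∏ k ∈ Finset.range n, (1 + q ^ k * z)) * S q (q ^ n * z) := by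
  induction n with
  | zero => simp
  | succ n ih =>
    rw [ih, Finset.prod_range_succ]
    have h := feq hq (q ^ n * z)
    rw [show q * (q ^ n * z) = q ^ (n+1) * z by ring] at h
    rw [h]; ring

end EulerQAux

namespace EulerQAux

lemma multipliable (hq : ‖q‖ < 1) (z : ℂ) :
    Multipliable (fun k : ℕ => 1 + q ^ k * z) := by
  by_cases hzero : ∃ k : ℕ, 1 + q ^ k * z = 0
  · obtain ⟨k0, hk0⟩ := hzero
    refine ⟨0, ?_⟩
    have hev : ∀ᶠ s : Finset ℕ in atTop, (∏ i ∈ s, (1 + q ^ i * z)) = 0 := by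
      refine eventually_atTop.2 ⟨{k0}, fun s hs => ?_⟩
      exact Finset.prod_eq_zero (hs (Finset.mem_singleton_self k0)) hk0
    exact (tendsto_congr' hev).mpr tendsto_const_nhds
  · push_neg at hzero
    have hfn : ∀ (_ : Unit) (n : ℕ), (fun k (_ : Unit) => 1 + q ^ k * z) n () ≠ 0 :=
      fun _ n => hzero n
    have hsumlog : Summable fun n : ℕ => Complex.log (1 + q ^ n * z) := by
      have hten : Tendsto (fun n : ℕ => ‖q‖ ^ n * ‖z‖) atTop (𝓝 0) := by
        simpa using (tendsto_pow_atTop_nhds_zero_of_lt_one (norm_nonneg q) hq).mul_const ‖z‖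
      have hev : ∀ᶠ n in atTop, ‖Complex.log (1 + q ^ n * z)‖ ≤ (3/2) * (‖q‖ ^ n * ‖z‖) := by
        filter_upwards [hten.eventually_le_const (by norm_num : (0:ℝ) < 1/2)] with n hn
        have hnorm : ‖q ^ n * z‖ = ‖q‖ ^ n * ‖z‖ := by rw [norm_mul, norm_pow]
        have := Complex.norm_log_one_add_half_le_self (z := q ^ n * z) (by rw [hnorm]; exact hn)
        rw [hnorm] at this; exact this
      apply Summable.of_norm_bounded_eventually_nat ?_ hev
      exact ((summable_geometric_of_lt_one (norm_nonneg q) hq).mul_right ‖z‖).mul_left _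
    exact Complex.multipliable_of_summable_log hsumlog

lemma S_sub_one (hq : ‖q‖ < 1) {R : ℝ} (w : ℂ) (hw : ‖w‖ ≤ R) :
    ‖S q w - 1‖ ≤ ‖w‖ * ∑' j : ℕ, ‖a q (j + 1)‖ * R ^ j := by
  have hR : 0 ≤ R := (norm_nonneg w).trans hw
  have h1 : HasSum (fun n : ℕ => a q (n + 1) * w ^ (n + 1))
      (S q w - ∑ i ∈ Finset.range 1, a q i * w ^ i) :=
    (hasSum_nat_add_iff' 1).mpr (summable_term hq w).hasSum
  have h2 : (∑ i ∈ Finset.range 1, a q i * w ^ i) = 1 := by simp [a_zero]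
  rw [h2] at h1
  rw [← h1.tsum_eq]
  have hbd : ∀ n : ℕ, ‖a q (n + 1) * w ^ (n + 1)‖ ≤ ‖w‖ * (‖a q (n + 1)‖ * R ^ n) := by
    intro n
    rw [norm_mul, norm_pow, pow_succ]
    calc ‖a q (n+1)‖ * (‖w‖ ^ n * ‖w‖)
        ≤ ‖a q (n+1)‖ * (R ^ n * ‖w‖) := by
          apply mul_le_mul_of_nonneg_left _ (norm_nonneg _)
          exact mul_le_mul_of_nonneg_right (pow_le_pow_left₀ (norm_nonneg w) hw n) (norm_nonneg w)
      _ = ‖w‖ * (‖a q (n+1)‖ * R ^ n) := by ring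
  have hsum2 : Summable (fun n : ℕ => ‖w‖ * (‖a q (n+1)‖ * R ^ n)) :=
    (summable_norm_shift hq hR).mul_left _
  have hsum1 : Summable (fun n : ℕ => ‖a q (n + 1) * w ^ (n + 1)‖) :=
    Summable.of_nonneg_of_le (fun n => norm_nonneg _) hbd hsum2
  calc ‖∑' n : ℕ, a q (n + 1) * w ^ (n + 1)‖ ≤ ∑' n : ℕ, ‖a q (n + 1) * w ^ (n + 1)‖ :=
        norm_tsum_le_tsum_norm hsum1
    _ ≤ ∑' n : ℕ, ‖w‖ * (‖a q (n+1)‖ * R ^ n) := Summable.tsum_le_tsum hbd hsum1 hsum2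
    _ = ‖w‖ * ∑' n : ℕ, ‖a q (n+1)‖ * R ^ n := tsum_mul_left

end EulerQAux

/-- Euler's q-identity: for |q| < 1 and every z,
∑_{j≥0} q^{C(j,2)} z^j / ((1-q)⋯(1-q^j)) = ∏_{k≥0} (1 + q^k z). -/
theorem euler_q_identity (q z : ℂ) (hq : ‖q‖ < 1) :
    HasSum
      (fun j : ℕ => q ^ j.choose 2 * z ^ j / ∏ i ∈ Finset.range j, (1 - q ^ (i + 1)))
      (∏' k : ℕ, (1 + q ^ k * z)) := by
  open EulerQAux in
  have key : S q z = ∏' k : ℕ, (1 + q ^ k * z) := by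
    have hmult := EulerQAux.multipliable hq z
    have hTP : Tendsto (fun n : ℕ => ∏ k ∈ Finset.range n, (1 + q ^ k * z)) atTop
        (𝓝 (∏' k : ℕ, (1 + q ^ k * z))) := hmult.hasProd.tendsto_prod_nat
    set C : ℝ := ∑' j : ℕ, ‖EulerQAux.a q (j + 1)‖ * ‖z‖ ^ j with hC
    have hC0 : 0 ≤ C :=
      tsum_nonneg fun j => by positivity
    have hS1 : Tendsto (fun n : ℕ => EulerQAux.S q (q ^ n * z)) atTop (𝓝 1) := by
      rw [tendsto_iff_norm_sub_tendsto_zero]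
      have hb : ∀ n : ℕ, ‖EulerQAux.S q (q ^ n * z) - 1‖ ≤ ‖q‖ ^ n * (‖z‖ * C) := by
        intro n
        have hwle : ‖q ^ n * z‖ ≤ ‖z‖ := by
          rw [norm_mul, norm_pow]
          calc ‖q‖ ^ n * ‖z‖ ≤ 1 * ‖z‖ :=
            mul_le_mul_of_nonneg_right (pow_le_one₀ (norm_nonneg q) hq.le) (norm_nonneg z)
            _ = ‖z‖ := one_mul _
        calc ‖EulerQAux.S q (q ^ n * z) - 1‖ ≤ ‖q ^ n * z‖ * C :=
              EulerQAux.S_sub_one hq _ hwle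
          _ = ‖q‖ ^ n * (‖z‖ * C) := by rw [norm_mul, norm_pow]; ring
      have hten : Tendsto (fun n : ℕ => ‖q‖ ^ n * (‖z‖ * C)) atTop (𝓝 0) := by
        simpa using (tendsto_pow_atTop_nhds_zero_of_lt_one (norm_nonneg q) hq).mul_const (‖z‖ * C)
      exact squeeze_zero (fun n => norm_nonneg _) hb hten
    have hmain : Tendsto (fun n : ℕ =>
        (∏ k ∈ Finset.range n, (1 + q ^ k * z)) * EulerQAux.S q (q ^ n * z)) atTop
        (𝓝 ((∏' k : ℕ, (1 + q ^ k * z)) * 1)) := hTP.mul hS1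
    have hconst : Tendsto (fun _ : ℕ => EulerQAux.S q z) atTop
        (𝓝 ((∏' k : ℕ, (1 + q ^ k * z)) * 1)) :=
      (tendsto_congr fun n => (EulerQAux.iter hq z n).symm).mp hmain
    have := tendsto_nhds_unique tendsto_const_nhds hconst
    rw [this, mul_one]
  have hfun : (fun j : ℕ => q ^ j.choose 2 * z ^ j / ∏ i ∈ Finset.range j, (1 - q ^ (i + 1)))
      = fun j : ℕ => EulerQAux.a q j * z ^ j := by
    funext j
    rw [EulerQAux.a, mul_div_right_comm]
  rw [hfun, ← key]
  exact (EulerQAux.summable_term hq z).hasSum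
end

section
/- For every complex s with s ∉ {-1, -1/2, -1/4, ...} and every k ≥ 0: 1/((s+1)(2s+1)⋯(2^k s+1)) = ∑_{0≤ℓ≤k} (-1)^{k-ℓ} 2^{-C(k-ℓ+1,2)-ℓ} / ((s+2^{-ℓ}) Q_ℓ Q_{k-ℓ}), where Q_m := ∏_{1≤i≤m}(1-2^{-i}) and C(m,2)=m(m-1)/2. -/
/-- Q_m = ∏_{1≤i≤m} (1 - 2^{-i}). -/
noncomputable def Qfin (m : ℕ) : ℂ := ∏ i ∈ Finset.range m, (1 - (1 : ℂ) / 2 ^ (i + 1))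

noncomputable def aC (n : ℕ) : ℂ := 1 / 2 ^ n

noncomputable def dC (ℓ m : ℕ) : ℂ :=
  (-1 : ℂ) ^ m * ((2 : ℂ) ^ ((m + 1) * m / 2 + ℓ))⁻¹ * (Qfin ℓ)⁻¹ * (Qfin m)⁻¹

lemma two_pow_ne_zero (n : ℕ) : (2 : ℂ) ^ n ≠ 0 := pow_ne_zero n two_ne_zero

lemma two_pow_inj {m n : ℕ} (h : (2 : ℂ) ^ m = (2 : ℂ) ^ n) : m = n := by
  have h' : ((2 ^ m : ℕ) : ℂ) = ((2 ^ n : ℕ) : ℂ) := by push_cast; exact h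
  exact Nat.pow_right_injective (le_refl 2) (Nat.cast_inj.mp h')

lemma pow_sub_one_ne (n : ℕ) : (2 : ℂ) ^ (n + 1) - 1 ≠ 0 := by
  intro h
  have h2 : (2 : ℂ) ^ (n + 1) = 2 ^ 0 := by
    rw [pow_zero]; linear_combination h
  exact (Nat.succ_ne_zero n) (two_pow_inj h2)

lemma one_sub_inv_eq (n : ℕ) :
    (1 : ℂ) - 1 / 2 ^ (n + 1) = ((2 : ℂ) ^ (n + 1) - 1) / 2 ^ (n + 1) := by
  field_simp

lemma one_sub_inv_two_pow_ne (n : ℕ) : (1 : ℂ) - 1 / 2 ^ (n + 1) ≠ 0 := by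
  rw [one_sub_inv_eq]
  exact div_ne_zero (pow_sub_one_ne n) (two_pow_ne_zero _)

lemma Qfin_ne_zero (m : ℕ) : Qfin m ≠ 0 := by
  unfold Qfin
  exact Finset.prod_ne_zero_iff.mpr fun i _ => one_sub_inv_two_pow_ne i

lemma Qfin_succ (m : ℕ) : Qfin (m + 1) = Qfin m * (1 - 1 / 2 ^ (m + 1)) :=
  Finset.prod_range_succ _ m

lemma tri_succ (m : ℕ) : (m + 2) * (m + 1) / 2 = (m + 1) * m / 2 + (m + 1) := by
  obtain ⟨c, hc⟩ := Nat.even_mul_succ_self m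
  have h2 : (m + 1) * m = 2 * c := by rw [Nat.mul_comm (m + 1) m]; omega
  have h : (m + 2) * (m + 1) = (m + 1) * m + 2 * (m + 1) := by ring
  omega

lemma dC_succ (ℓ m : ℕ) :
    dC ℓ (m + 1) = dC ℓ m * (-1) * ((2 : ℂ) ^ (m + 1))⁻¹ * ((1 : ℂ) - 1 / 2 ^ (m + 1))⁻¹ := by
  unfold dC
  rw [tri_succ, Qfin_succ, pow_succ (-1 : ℂ) m,
    show (m + 1) * m / 2 + (m + 1) + ℓ = ((m + 1) * m / 2 + ℓ) + (m + 1) by omega,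
    pow_add, mul_inv, mul_inv]
  ring

lemma dC_succ_left (ℓ m : ℕ) :
    dC (ℓ + 1) m = dC ℓ m * 2⁻¹ * ((1 : ℂ) - 1 / 2 ^ (ℓ + 1))⁻¹ := by
  unfold dC
  rw [show (m + 1) * m / 2 + (ℓ + 1) = ((m + 1) * m / 2 + ℓ) + 1 by omega,
    pow_succ, mul_inv, Qfin_succ, mul_inv]
  ring

lemma dA_aux (x y : ℂ) (hx : x ≠ 0) (hy : y ≠ 0) (hz : y - 1 ≠ 0) :
    (-1 : ℂ) * y⁻¹ * ((y - 1) / y)⁻¹ * (1 / (x * y) - 1 / x) = (x * y)⁻¹ := by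
  field_simp
  ring

lemma dA (ℓ m : ℕ) :
    dC ℓ (m + 1) * (aC (ℓ + m + 1) - aC ℓ) = dC ℓ m * ((2 : ℂ) ^ (ℓ + m + 1))⁻¹ := by
  rw [dC_succ, one_sub_inv_eq]
  unfold aC
  rw [show ℓ + m + 1 = ℓ + (m + 1) by omega, pow_add]
  linear_combination (dC ℓ m) *
    dA_aux (2 ^ ℓ) (2 ^ (m + 1)) (two_pow_ne_zero ℓ) (two_pow_ne_zero (m + 1)) (pow_sub_one_ne m)

lemma dB (ℓ m : ℕ) :
    dC (ℓ + 1) m * ((1 : ℂ) - aC (ℓ + 1)) = dC ℓ m * 2⁻¹ := by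
  rw [dC_succ_left]
  unfold aC
  rw [mul_assoc, mul_assoc, inv_mul_cancel₀ (one_sub_inv_two_pow_ne ℓ), mul_one]

lemma aC_zero : aC 0 = 1 := by simp [aC]

lemma pair (x y t : ℂ) (hx : t + x ≠ 0) (hy : t + y ≠ 0) :
    (y - x) * ((t + x)⁻¹ * (t + y)⁻¹) = (t + x)⁻¹ - (t + y)⁻¹ := by
  field_simp
  ring

lemma main (k : ℕ) : ∀ s : ℂ, (∀ j : ℕ, s + aC j ≠ 0) →
    (∏ j ∈ Finset.range (k + 1), ((2 : ℂ) ^ j * s + 1))⁻¹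
      = ∑ ℓ ∈ Finset.range (k + 1), dC ℓ (k - ℓ) * (s + aC ℓ)⁻¹ := by
  induction k with
  | zero =>
    intro s hs
    simp [dC, Qfin, aC]
  | succ k IH =>
    intro s hs
    have hA : ∀ t : ℂ, (∀ j, t + aC j ≠ 0) →
        (∏ j ∈ Finset.range (k + 1 + 1), ((2 : ℂ) ^ j * t + 1))⁻¹
          = ∑ ℓ ∈ Finset.range (k + 1),
              (dC ℓ (k + 1 - ℓ) * (t + aC ℓ)⁻¹ - dC ℓ (k + 1 - ℓ) * (t + aC (k + 1))⁻¹) := by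
      intro t ht
      rw [Finset.prod_range_succ, mul_inv, IH t ht]
      have h2 : ((2 : ℂ) ^ (k + 1) * t + 1)⁻¹ = ((2 : ℂ) ^ (k + 1))⁻¹ * (t + aC (k + 1))⁻¹ := by
        rw [← mul_inv]
        congr 1
        unfold aC
        field_simp
      rw [h2, Finset.sum_mul]
      apply Finset.sum_congr rfl
      intro ℓ hℓ
      have hℓ' := Finset.mem_range.mp hℓ
      obtain ⟨m, rfl⟩ : ∃ m, k = ℓ + m := ⟨k - ℓ, by omega⟩
      rw [Nat.add_sub_cancel_left, show ℓ + m + 1 - ℓ = m + 1 by omega]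
      calc dC ℓ m * (t + aC ℓ)⁻¹ * (((2 : ℂ) ^ (ℓ + m + 1))⁻¹ * (t + aC (ℓ + m + 1))⁻¹)
          = dC ℓ (m + 1) * ((aC (ℓ + m + 1) - aC ℓ) * ((t + aC ℓ)⁻¹ * (t + aC (ℓ + m + 1))⁻¹)) := by
            linear_combination ((t + aC ℓ)⁻¹ * (t + aC (ℓ + m + 1))⁻¹) * (dA ℓ m).symm
        _ = dC ℓ (m + 1) * ((t + aC ℓ)⁻¹ - (t + aC (ℓ + m + 1))⁻¹) := by
            rw [pair _ _ _ (ht ℓ) (ht (ℓ + m + 1))]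
        _ = dC ℓ (m + 1) * (t + aC ℓ)⁻¹ - dC ℓ (m + 1) * (t + aC (ℓ + m + 1))⁻¹ := by ring
    have hB : ∀ t : ℂ, (∀ j, t + aC j ≠ 0) →
        (∏ j ∈ Finset.range (k + 1 + 1), ((2 : ℂ) ^ j * t + 1))⁻¹
          = ∑ ℓ ∈ Finset.range (k + 1),
              (dC (ℓ + 1) (k - ℓ) * (t + aC (ℓ + 1))⁻¹ - dC (ℓ + 1) (k - ℓ) * (t + aC 0)⁻¹) := by
      intro t ht
      have ht2 : ∀ j, 2 * t + aC j ≠ 0 := by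
        intro j
        have he : 2 * t + aC j = 2 * (t + aC (j + 1)) := by
          unfold aC
          rw [pow_succ]
          have := two_pow_ne_zero j
          field_simp
        rw [he]
        exact mul_ne_zero two_ne_zero (ht (j + 1))
      rw [Finset.prod_range_succ']
      have hprod : ∏ j ∈ Finset.range (k + 1), ((2 : ℂ) ^ (j + 1) * t + 1)
          = ∏ j ∈ Finset.range (k + 1), ((2 : ℂ) ^ j * (2 * t) + 1) :=
        Finset.prod_congr rfl (fun j _ => by rw [pow_succ]; ring_nf)
      rw [hprod, mul_inv, IH (2 * t) ht2, Finset.sum_mul]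
      apply Finset.sum_congr rfl
      intro ℓ hℓ
      have hsplit : ((2 : ℂ) * t + aC ℓ)⁻¹ = 2⁻¹ * (t + aC (ℓ + 1))⁻¹ := by
        rw [← mul_inv]
        congr 1
        unfold aC
        rw [pow_succ]
        have := two_pow_ne_zero ℓ
        field_simp
      have ht1 : t + 1 ≠ 0 := by have := ht 0; rwa [aC_zero] at this
      rw [hsplit, aC_zero]
      simp only [pow_zero, one_mul]
      calc dC ℓ (k - ℓ) * (2⁻¹ * (t + aC (ℓ + 1))⁻¹) * (t + 1)⁻¹
          = dC (ℓ + 1) (k - ℓ) * (((1 : ℂ) - aC (ℓ + 1)) * ((t + aC (ℓ + 1))⁻¹ * (t + 1)⁻¹)) := by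
            linear_combination ((t + aC (ℓ + 1))⁻¹ * (t + 1)⁻¹) * (dB ℓ (k - ℓ)).symm
        _ = dC (ℓ + 1) (k - ℓ) * ((t + aC (ℓ + 1))⁻¹ - (t + 1)⁻¹) := by
            rw [pair (aC (ℓ + 1)) 1 t (ht (ℓ + 1)) ht1]
        _ = dC (ℓ + 1) (k - ℓ) * (t + aC (ℓ + 1))⁻¹ - dC (ℓ + 1) (k - ℓ) * (t + 1)⁻¹ := by
            ring
    -- rewrite both expansions relative to the full target sum T
    set E : ℂ := ∑ ℓ ∈ Finset.range (k + 1), dC ℓ (k + 1 - ℓ) with hE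
    set D : ℂ := ∑ ℓ ∈ Finset.range (k + 1), dC (ℓ + 1) (k - ℓ) with hD
    have hTA : ∀ t : ℂ,
        (∑ ℓ ∈ Finset.range (k + 1 + 1), dC ℓ (k + 1 - ℓ) * (t + aC ℓ)⁻¹)
          = (∑ ℓ ∈ Finset.range (k + 1), dC ℓ (k + 1 - ℓ) * (t + aC ℓ)⁻¹)
            + dC (k + 1) 0 * (t + aC (k + 1))⁻¹ := by
      intro t
      rw [Finset.sum_range_succ, Nat.sub_self]
    have hTB : ∀ t : ℂ,
        (∑ ℓ ∈ Finset.range (k + 1 + 1), dC ℓ (k + 1 - ℓ) * (t + aC ℓ)⁻¹)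
          = (∑ ℓ ∈ Finset.range (k + 1), dC (ℓ + 1) (k - ℓ) * (t + aC (ℓ + 1))⁻¹)
            + dC 0 (k + 1) * (t + aC 0)⁻¹ := by
      intro t
      rw [Finset.sum_range_succ']
      congr 1
      apply Finset.sum_congr rfl
      intro ℓ hℓ
      rw [Nat.succ_sub_succ]
    have hA' : ∀ t : ℂ, (∀ j, t + aC j ≠ 0) →
        (∏ j ∈ Finset.range (k + 1 + 1), ((2 : ℂ) ^ j * t + 1))⁻¹
          = (∑ ℓ ∈ Finset.range (k + 1 + 1), dC ℓ (k + 1 - ℓ) * (t + aC ℓ)⁻¹)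
            + (-(dC (k + 1) 0 + E)) * (t + aC (k + 1))⁻¹ := by
      intro t ht
      rw [hA t ht, Finset.sum_sub_distrib, ← Finset.sum_mul, hTA t, ← hE]
      ring
    have hB' : ∀ t : ℂ, (∀ j, t + aC j ≠ 0) →
        (∏ j ∈ Finset.range (k + 1 + 1), ((2 : ℂ) ^ j * t + 1))⁻¹
          = (∑ ℓ ∈ Finset.range (k + 1 + 1), dC ℓ (k + 1 - ℓ) * (t + aC ℓ)⁻¹)
            + (-(dC 0 (k + 1) + D)) * (t + aC 0)⁻¹ := by
      intro t ht
      rw [hB t ht, Finset.sum_sub_distrib, ← Finset.sum_mul, hTB t, ← hD]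
      ring
    set β : ℂ := -(dC (k + 1) 0 + E) with hbeta
    set α : ℂ := -(dC 0 (k + 1) + D) with halpha
    have h0 : ∀ j, (0 : ℂ) + aC j ≠ 0 := by
      intro j
      rw [zero_add]
      unfold aC
      exact one_div_ne_zero (two_pow_ne_zero j)
    have h1 : ∀ j, (1 : ℂ) + aC j ≠ 0 := by
      intro j h
      unfold aC at h
      have h2 : ((2 ^ j + 1 : ℕ) : ℂ) = 0 := by
        push_cast
        have := two_pow_ne_zero j
        field_simp at h
        linear_combination h
      exact Nat.add_one_ne_zero _ (Nat.cast_eq_zero.mp h2)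
    have e0 : β * ((0 : ℂ) + aC (k + 1))⁻¹ = α * ((0 : ℂ) + aC 0)⁻¹ := by
      have := (hA' 0 h0).symm.trans (hB' 0 h0)
      exact add_left_cancel this
    have e1 : β * ((1 : ℂ) + aC (k + 1))⁻¹ = α * ((1 : ℂ) + aC 0)⁻¹ := by
      have := (hA' 1 h1).symm.trans (hB' 1 h1)
      exact add_left_cancel this
    have e0' : α = β * 2 ^ (k + 1) := by
      rw [zero_add, zero_add, aC_zero, inv_one, mul_one] at e0
      rw [← e0]
      unfold aC
      rw [one_div, inv_inv]
    have e1' : β * ((1 : ℂ) + aC (k + 1))⁻¹ = β * 2 ^ (k + 1) * 2⁻¹ := by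
      rw [e1, e0', aC_zero]
      norm_num
    have hb0 : β = 0 := by
      have hne : (1 : ℂ) + aC (k + 1) ≠ 0 := h1 (k + 1)
      have e2 : β = β * 2 ^ (k + 1) * 2⁻¹ * (1 + aC (k + 1)) := by
        calc β = β * ((1 : ℂ) + aC (k + 1))⁻¹ * (1 + aC (k + 1)) := by
              rw [mul_assoc, inv_mul_cancel₀ hne, mul_one]
          _ = β * 2 ^ (k + 1) * 2⁻¹ * (1 + aC (k + 1)) := by rw [e1']
      have e3 : β * (2 ^ (k + 1) * 2⁻¹ * (1 + aC (k + 1)) - 1) = 0 := by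
        linear_combination e2.symm
      have hfac : (2 : ℂ) ^ (k + 1) * 2⁻¹ * (1 + aC (k + 1)) - 1 ≠ 0 := by
        unfold aC
        have h2 := two_pow_ne_zero (k + 1)
        have h3 := pow_sub_one_ne k
        have hx : (2 : ℂ) ^ (k + 1) * ((2 : ℂ) ^ (k + 1))⁻¹ = 1 := mul_inv_cancel₀ h2
        have hy : (2 : ℂ) * 2⁻¹ = 1 := mul_inv_cancel₀ two_ne_zero
        have heq : (2 : ℂ) ^ (k + 1) * 2⁻¹ * (1 + 1 / 2 ^ (k + 1)) - 1
            = ((2 : ℂ) ^ (k + 1) - 1) * 2⁻¹ := by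
          rw [one_div]
          linear_combination 2⁻¹ * hx + hy
        rw [heq]
        exact mul_ne_zero h3 (inv_ne_zero two_ne_zero)
      rcases mul_eq_zero.mp e3 with h | h
      · exact h
      · exact absurd h hfac
    rw [hA' s hs, hb0, zero_mul, add_zero]

/-- Partial fraction expansion: for s ∉ {-1, -1/2, -1/4, …} and every k ≥ 0,
1/((s+1)(2s+1)⋯(2^k s+1)) = ∑_{0≤ℓ≤k} (-1)^{k-ℓ} 2^{-C(k-ℓ+1,2)-ℓ}/((s+2^{-ℓ}) Q_ℓ Q_{k-ℓ}). -/
theorem partial_fraction_expansion (s : ℂ) (hs : ∀ j : ℕ, s ≠ -(1 / 2 ^ j)) (k : ℕ) :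
    (∏ j ∈ Finset.range (k + 1), ((2 : ℂ) ^ j * s + 1))⁻¹ =
      ∑ ℓ ∈ Finset.range (k + 1),
        (-1 : ℂ) ^ (k - ℓ) * ((2 : ℂ) ^ ((k - ℓ + 1) * (k - ℓ) / 2 + ℓ))⁻¹ /
          ((s + 1 / 2 ^ ℓ) * Qfin ℓ * Qfin (k - ℓ)) := by
  have hv : ∀ j : ℕ, s + aC j ≠ 0 := by
    intro j h
    exact hs j (eq_neg_of_add_eq_zero_left h)
  rw [main k s hv]
  apply Finset.sum_congr rfl
  intro ℓ hℓ
  unfold dC aC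
  simp only [div_eq_mul_inv, mul_inv]
  ring
end

section
/- For every complex s not equal to any -2^{-j}, ∑_{j≥0} 2^j s / ((s+1)(2s+1)⋯(2^j s+1)) = 1. -/
open Filter Finset

/-- For every s ≠ 0 not equal to any -2^{-j} (so that every factor 2^i s + 1 is nonzero),
∑_{j≥0} 2^j s/((s+1)(2s+1)⋯(2^j s+1)) = 1. -/
theorem telescoping_sum_eq_one (s : ℂ) (hs0 : s ≠ 0)
    (hs : ∀ i : ℕ, (2 : ℂ) ^ i * s + 1 ≠ 0) :
    HasSum
      (fun j : ℕ => (2 : ℂ) ^ j * s / ∏ i ∈ Finset.range (j + 1), ((2 : ℂ) ^ i * s + 1))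
      1 := by
  set P : ℕ → ℂ := fun n => ∏ i ∈ Finset.range n, ((2 : ℂ) ^ i * s + 1) with hP
  have hPne : ∀ n, P n ≠ 0 := by
    intro n
    exact Finset.prod_ne_zero_iff.2 fun i _ => hs i
  set f : ℕ → ℂ := fun j => (2 : ℂ) ^ j * s / P (j + 1) with hf
  -- the norm of 2^n s + 1 is eventually large
  have hbig : ∀ C : ℝ, ∀ᶠ n in atTop, C ≤ ‖(2 : ℂ) ^ n * s + 1‖ := by
    intro C
    have h1 : Tendsto (fun n : ℕ => (2 : ℝ) ^ n * ‖s‖) atTop atTop := by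
      apply Tendsto.atTop_mul_const (norm_pos_iff.2 hs0)
      exact tendsto_pow_atTop_atTop_of_one_lt (by norm_num)
    filter_upwards [h1.eventually_ge_atTop (C + 1)] with n hn
    have h2 : ‖(2 : ℂ) ^ n * s‖ = (2 : ℝ) ^ n * ‖s‖ := by
      rw [norm_mul, norm_pow]; norm_num
    have h3 : ‖(2 : ℂ) ^ n * s‖ ≤ ‖(2 : ℂ) ^ n * s + 1‖ + ‖(1 : ℂ)‖ := by
      calc ‖(2 : ℂ) ^ n * s‖ = ‖(2 : ℂ) ^ n * s + 1 - 1‖ := by ring_nf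
        _ ≤ ‖(2 : ℂ) ^ n * s + 1‖ + ‖(1 : ℂ)‖ := norm_sub_le _ _
    simp only [norm_one] at h3
    linarith [h2 ▸ h3]
  -- inverse of P tends to 0
  have hg : Summable (fun n => (P n)⁻¹) := by
    apply summable_of_ratio_norm_eventually_le (r := 1/2) (by norm_num)
    filter_upwards [hbig 2] with n hn
    have : P (n + 1) = P n * ((2 : ℂ) ^ n * s + 1) := by
      simp [hP, Finset.prod_range_succ]
    rw [this, mul_inv, norm_mul, mul_comm]
    gcongr
    rw [norm_inv]
    rw [inv_le_comm₀ (by positivity) (by norm_num)]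
    linarith
  have hg0 : Tendsto (fun n => (P n)⁻¹) atTop (nhds 0) := hg.tendsto_atTop_zero
  -- f is summable by the ratio test
  have hfs : Summable f := by
    apply summable_of_ratio_norm_eventually_le (r := 1/2) (by norm_num)
    filter_upwards [(tendsto_add_atTop_nat 1).eventually (hbig 4)] with n hn
    have hrec : f (n + 1) = f n * (2 * ((2 : ℂ) ^ (n + 1) * s + 1)⁻¹) := by
      have hPn : P (n + 2) = P (n + 1) * ((2 : ℂ) ^ (n + 1) * s + 1) := by
        simp [hP, Finset.prod_range_succ]
      simp only [hf]
      field_simp [hPn, hPne, hs]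
      rw [show P (n + 1 + 1) = P (n + 2) from rfl, hPn]
      ring
    rw [hrec, norm_mul, norm_mul, norm_inv, mul_comm (1/2 : ℝ)]
    gcongr
    have h4 : (4 : ℝ) ≤ ‖(2 : ℂ) ^ (n + 1) * s + 1‖ := hn
    rw [div_eq_mul_inv, show ‖(2:ℂ)‖ = 2 by norm_num]
    rw [show (1:ℝ) * 2⁻¹ = 2 * 4⁻¹ by norm_num]
    gcongr
  -- telescoping: partial sums equal 1 - (P n)⁻¹
  have htel : ∀ n, ∑ j ∈ Finset.range n, f j = 1 - (P n)⁻¹ := by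
    intro n
    induction n with
    | zero => simp [hP]
    | succ n ih =>
      rw [Finset.sum_range_succ, ih]
      have hPn : P (n + 1) = P n * ((2 : ℂ) ^ n * s + 1) := by
        simp [hP, Finset.prod_range_succ]
      have : f n = (P n)⁻¹ - (P (n + 1))⁻¹ := by
        simp only [hf]
        field_simp [hPn, hPne, hs]
        rw [hPn]; ring
      rw [this]; ring
  have hlim : Tendsto (fun n => ∑ j ∈ Finset.range n, f j) atTop (nhds 1) := by
    simp only [htel]
    have : Tendsto (fun n => 1 - (P n)⁻¹) atTop (nhds (1 - 0)) :=
      tendsto_const_nhds.sub hg0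
    simpa using this
  have := hfs.hasSum
  have heq : ∑' j, f j = 1 :=
    tendsto_nhds_unique (hfs.hasSum.tendsto_sum_nat) hlim
  exact heq ▸ hfs.hasSum
end

section
/- Let μ_n := E(X_n) be the expected internal path-length of random symmetric digital search trees, satisfying μ_0 = 0 and μ_{n+1} = 2^{1-n} ∑_{0≤j≤n} C(n,j) μ_j + n for n ≥ 0. Then the coefficients of its Poisson generating function satisfy n![z^n] (e^{-z} ∑_k μ_k z^k/k!) = (-1)^n Q_{n-2} for n ≥ 2, where Q_m := ∏_{1≤i≤m}(1 - 2^{-i}). -/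
open Finset

noncomputable def Qr (m : ℕ) : ℝ := ∏ i ∈ Finset.range m, (1 - (1 : ℝ) / 2 ^ (i + 1))

noncomputable def bb (n : ℕ) : ℝ := if n < 2 then 0 else (-1)^n * Qr (n-2)

lemma Qr_nonneg (m : ℕ) : 0 ≤ Qr m := by
  apply Finset.prod_nonneg
  intro i _
  have : (1:ℝ)/2^(i+1) ≤ 1 := by
    rw [div_le_one (by positivity)]
    exact one_le_pow₀ (by norm_num)
  linarith

lemma Qr_le_one (m : ℕ) : Qr m ≤ 1 := by
  apply Finset.prod_le_one
  · intro i _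
    have : (1:ℝ)/2^(i+1) ≤ 1 := by
      rw [div_le_one (by positivity)]
      exact one_le_pow₀ (by norm_num)
    linarith
  · intro i _
    have : (0:ℝ) < 1/2^(i+1) := by positivity
    linarith

lemma bb_abs_le (n : ℕ) : |bb n| ≤ 1 := by
  unfold bb
  split
  · simp
  · rw [abs_mul, abs_pow, abs_neg, abs_one, one_pow, one_mul,
      abs_of_nonneg (Qr_nonneg _)]
    exact Qr_le_one _

lemma bb_key (j : ℕ) : bb j + bb (j+1) = (2/2^j) * bb j + (if j = 1 then 1 else 0) := by
  match j with
  | 0 => simp [bb]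
  | 1 => norm_num [bb, Qr]
  | (m+2) =>
    have h1 : bb (m+2) = (-1)^(m+2) * Qr m := by simp [bb]
    have h2 : bb (m+3) = (-1)^(m+3) * (Qr m * (1 - 1/2^(m+1))) := by
      simp only [bb]
      rw [if_neg (by omega), show m+3-2 = m+1 by omega, Qr, Finset.prod_range_succ, ← Qr]
    rw [h1, h2]
    have hp : ((-1:ℝ))^(m+3) = -((-1)^(m+2)) := by ring
    rw [hp]
    have : (2:ℝ)/2^(m+2) = 1/2^(m+1) := by
      rw [div_eq_div_iff (by positivity) (by positivity)]
      ring
    rw [this]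
    rw [if_neg (by omega)]
    ring

lemma csum (m i : ℕ) (hi : i ≤ m) :
    ∑ j ∈ range (m+1), m.choose j * j.choose i = m.choose i * 2^(m-i) := by
  rw [range_eq_Ico, ← Finset.sum_Ico_consecutive _ (Nat.zero_le i) (by omega : i ≤ m+1)]
  have h1 : ∑ j ∈ Finset.Ico 0 i, m.choose j * j.choose i = 0 := by
    apply Finset.sum_eq_zero
    intro j hj
    simp only [Finset.mem_Ico] at hj
    rw [Nat.choose_eq_zero_of_lt hj.2, mul_zero]
  rw [h1, zero_add, Finset.sum_Ico_eq_sum_range]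
  have h2 : ∀ t ∈ range (m+1-i), m.choose (i+t) * (i+t).choose i = m.choose i * (m-i).choose t := by
    intro t ht
    simp only [Finset.mem_range] at ht
    rw [Nat.choose_mul (show i ≤ i+t by omega),
      Nat.add_sub_cancel_left]
  rw [Finset.sum_congr rfl h2, ← Finset.mul_sum, show m+1-i = (m-i)+1 by omega,
    Nat.sum_range_choose]

lemma pascal_sum (g : ℕ → ℝ) (m : ℕ) :
    ∑ j ∈ range (m+2), ((m+1).choose j : ℝ) * g j
      = ∑ j ∈ range (m+1), (m.choose j : ℝ) * (g j + g (j+1)) := by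
  rw [Finset.sum_range_succ' _ (m+1)]
  have h1 : ∀ j ∈ range (m+1), ((m+1).choose (j+1) : ℝ) * g (j+1)
      = (m.choose j : ℝ) * g (j+1) + (m.choose (j+1) : ℝ) * g (j+1) := by
    intro j _
    rw [Nat.choose_succ_succ' m j]
    push_cast
    ring
  rw [Finset.sum_congr rfl h1, Finset.sum_add_distrib]
  have h2 : ∑ j ∈ range (m+1), (m.choose (j+1) : ℝ) * g (j+1)
      = ∑ j ∈ range (m+2), (m.choose j : ℝ) * g j - (m.choose 0 : ℝ) * g 0 := by
    rw [Finset.sum_range_succ' (fun j => (m.choose j : ℝ) * g j) (m+1)]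
    ring
  rw [h2, Finset.sum_range_succ (fun j => (m.choose j : ℝ) * g j) (m+1),
    Nat.choose_succ_self]
  simp only [mul_add, Finset.sum_add_distrib, Nat.choose_zero_right, Nat.cast_one,
    Nat.cast_zero]
  ring

lemma mu_eq (μ : ℕ → ℝ) (h0 : μ 0 = 0)
    (hrec : ∀ n : ℕ,
      μ (n + 1) = (2 / 2 ^ n) * ∑ j ∈ Finset.range (n + 1), (n.choose j : ℝ) * μ j + n) :
    ∀ n, μ n = ∑ j ∈ range (n+1), (n.choose j : ℝ) * bb j := by
  intro n
  induction n using Nat.strong_induction_on with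
  | _ n ih =>
    match n with
    | 0 => simp [h0, bb]
    | (m+1) =>
      rw [hrec m]
      have hsub : ∑ j ∈ range (m+1), (m.choose j : ℝ) * μ j
          = ∑ j ∈ range (m+1), (m.choose j : ℝ) * ∑ i ∈ range (j+1), (j.choose i : ℝ) * bb i := by
        refine Finset.sum_congr rfl fun j hj => ?_
        rw [ih j (by simp at hj; omega)]
      rw [hsub]
      -- extend inner sums to range (m+1)
      have hext : ∀ j ∈ range (m+1),
          (m.choose j : ℝ) * ∑ i ∈ range (j+1), (j.choose i : ℝ) * bb i
          = ∑ i ∈ range (m+1), (m.choose j : ℝ) * ((j.choose i : ℝ) * bb i) := by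
        intro j hj
        simp only [mem_range] at hj
        rw [Finset.mul_sum]
        refine Finset.sum_subset (fun x hx => by simp only [mem_range] at hx ⊢; omega) ?_
        intro i _ hi
        simp only [mem_range, not_lt] at hi
        rw [Nat.choose_eq_zero_of_lt (by omega : j < i)]
        simp
      rw [Finset.sum_congr rfl hext, Finset.sum_comm]
      have hswap : ∀ i ∈ range (m+1),
          ∑ j ∈ range (m+1), (m.choose j : ℝ) * ((j.choose i : ℝ) * bb i)
          = ((m.choose i : ℝ) * 2^(m-i)) * bb i := by
        intro i hi
        simp only [mem_range] at hi
        have := csum m i (by omega)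
        calc ∑ j ∈ range (m+1), (m.choose j : ℝ) * ((j.choose i : ℝ) * bb i)
            = (∑ j ∈ range (m+1), ((m.choose j * j.choose i : ℕ) : ℝ)) * bb i := by
              rw [Finset.sum_mul]; refine Finset.sum_congr rfl fun j _ => ?_; push_cast; ring
          _ = ((m.choose i : ℝ) * 2^(m-i)) * bb i := by
              rw [← Nat.cast_sum, this]; push_cast; ring
      rw [Finset.sum_congr rfl hswap]
      rw [pascal_sum bb m]
      have hkey : ∀ j ∈ range (m+1), (m.choose j : ℝ) * (bb j + bb (j+1))
          = (m.choose j : ℝ) * ((2/2^j) * bb j) + (m.choose j : ℝ) * (if j = 1 then 1 else 0) := by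
        intro j _
        rw [bb_key j]; ring
      rw [Finset.sum_congr rfl hkey, Finset.sum_add_distrib]
      have hite : ∑ j ∈ range (m+1), (m.choose j : ℝ) * (if j = 1 then 1 else 0) = (m : ℝ) := by
        simp only [mul_ite, mul_one, mul_zero]
        rw [Finset.sum_ite_eq' (range (m+1)) 1 (fun j => (m.choose j : ℝ))]
        rcases Nat.eq_zero_or_pos m with hm|hm
        · subst hm; simp
        · rw [if_pos (by simp only [mem_range]; omega)]
          simp [Nat.choose_one_right]
      rw [hite]
      congr 1
      rw [Finset.mul_sum]
      refine Finset.sum_congr rfl fun i hi => ?_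
      simp only [mem_range] at hi
      have h2 : (2:ℝ)^(m-i) = 2^m / 2^i := by
        rw [eq_div_iff (by positivity), ← pow_add]
        congr 1
        omega
      rw [h2]
      have h2i : (2:ℝ)^i ≠ 0 := by positivity
      have h2m : (2:ℝ)^m ≠ 0 := by positivity
      field_simp

open scoped Nat

lemma g_summable_norm (z : ℂ) :
    Summable (fun n : ℕ => ‖(bb n : ℂ) * z ^ n / (n.factorial : ℂ)‖) := by
  refine Summable.of_nonneg_of_le (fun n => norm_nonneg _) (fun n => ?_)
    (Real.summable_pow_div_factorial ‖z‖)
  rw [norm_div, norm_mul, norm_pow]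
  have h1 : ‖((n.factorial : ℕ) : ℂ)‖ = (n.factorial : ℝ) := by
    rw [Complex.norm_natCast]
  have h2 : ‖((bb n : ℝ) : ℂ)‖ = |bb n| := by
    rw [Complex.norm_real, Real.norm_eq_abs]
  rw [h1, h2]
  have := bb_abs_le n
  have hfac : (0:ℝ) < n.factorial := by positivity
  gcongr
  calc |bb n| * ‖z‖ ^ n ≤ 1 * ‖z‖ ^ n := by gcongr
    _ = ‖z‖ ^ n := one_mul _

lemma exp_summable_norm (z : ℂ) :
    Summable (fun n : ℕ => ‖z ^ n / (n.factorial : ℂ)‖) := by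
  refine Summable.of_nonneg_of_le (fun n => norm_nonneg _) (fun n => ?_)
    (Real.summable_pow_div_factorial ‖z‖)
  rw [norm_div, norm_pow, Complex.norm_natCast]

lemma key_sum (μ : ℕ → ℝ)
    (hmu : ∀ n, μ n = ∑ j ∈ range (n+1), (n.choose j : ℝ) * bb j) (z : ℂ) :
    Complex.exp z * ∑' n : ℕ, (bb n : ℂ) * z ^ n / (n.factorial : ℂ)
      = ∑' k : ℕ, (μ k : ℂ) * z ^ k / (k.factorial : ℂ) := by
  have hexp : Complex.exp z = ∑' n : ℕ, z ^ n / (n.factorial : ℂ) := by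
    rw [Complex.exp_eq_exp_ℂ, NormedSpace.exp_eq_tsum_div]
  rw [hexp, tsum_mul_tsum_eq_tsum_sum_range_of_summable_norm (exp_summable_norm z)
    (g_summable_norm z)]
  refine tsum_congr fun n => ?_
  rw [← Finset.sum_range_reflect]
  have hterm : ∀ j ∈ range (n+1),
      z ^ (n + 1 - 1 - j) / ((n + 1 - 1 - j).factorial : ℂ) *
        ((bb (n - (n + 1 - 1 - j)) : ℂ) * z ^ (n - (n + 1 - 1 - j)) /
          (((n - (n + 1 - 1 - j)).factorial : ℂ)))
      = (n.choose j : ℂ) * (bb j : ℂ) * z ^ n / (n.factorial : ℂ) := by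
    intro j hj
    simp only [mem_range] at hj
    have hj' : j ≤ n := by omega
    rw [show n + 1 - 1 - j = n - j by omega, show n - (n - j) = j by omega]
    rw [Nat.cast_choose ℂ hj']
    have h1 : ((n-j).factorial : ℂ) ≠ 0 := by exact_mod_cast (n-j).factorial_ne_zero
    have h2 : (j.factorial : ℂ) ≠ 0 := by exact_mod_cast j.factorial_ne_zero
    have h3 : ((n).factorial : ℂ) ≠ 0 := by exact_mod_cast n.factorial_ne_zero
    field_simp
    rw [show z ^ n = z ^ (n-j) * z ^ j by rw [← pow_add]; congr 1; omega]
    ring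
  rw [Finset.sum_congr rfl hterm, hmu n]
  push_cast
  rw [Finset.sum_mul, Finset.sum_div]

lemma Qr_cast (m : ℕ) : ((Qr m : ℝ) : ℂ) = ∏ i ∈ Finset.range m, (1 - (1 : ℂ) / 2 ^ (i + 1)) := by
  rw [Qr]
  push_cast
  rfl


/-- If μ_n is the expected internal path-length of random symmetric DSTs
(μ_0 = 0, μ_{n+1} = 2^{1-n} ∑_j C(n,j) μ_j + n), then the Taylor coefficients of its
Poisson generating function f̃₁(z) = e^{-z} ∑ μ_k z^k/k! satisfy
n![z^n] f̃₁ = (-1)^n Q_{n-2} for n ≥ 2. -/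
theorem poisson_coeff_dst_mean (μ : ℕ → ℝ) (h0 : μ 0 = 0)
    (hrec : ∀ n : ℕ,
      μ (n + 1) = (2 / 2 ^ n) * ∑ j ∈ Finset.range (n + 1), (n.choose j : ℝ) * μ j + n)
    (f : ℂ → ℂ)
    (hf : ∀ z : ℂ, f z = Complex.exp (-z) * ∑' k : ℕ, (μ k : ℂ) * z ^ k / (k.factorial : ℂ))
    (n : ℕ) (hn : 2 ≤ n) :
    iteratedDeriv n f 0 = (-1 : ℂ) ^ n * Qfin (n - 2) := by
  show iteratedDeriv n f 0
    = (-1 : ℂ) ^ n * ∏ i ∈ Finset.range (n-2), (1 - (1 : ℂ) / 2 ^ (i + 1))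

  have hmu := mu_eq μ h0 hrec
  set c : ℕ → ℂ := fun n => (bb n : ℂ) / (n.factorial : ℂ) with hc
  have hfg : ∀ z, f z = ∑' m : ℕ, (bb m : ℂ) * z ^ m / (m.factorial : ℂ) := by
    intro z
    rw [hf z, ← key_sum μ hmu z, ← mul_assoc, ← Complex.exp_add, neg_add_cancel,
      Complex.exp_zero, one_mul]
  have hps : HasFPowerSeriesOnBall f (FormalMultilinearSeries.ofScalars ℂ c) 0 1 := by
    constructor
    · apply FormalMultilinearSeries.le_radius_of_bound _ 1
      intro m
      rw [FormalMultilinearSeries.ofScalars_norm]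
      simp only [hc]
      rw [norm_div, Complex.norm_real, Complex.norm_natCast, Real.norm_eq_abs]
      have h1 : (1:ℝ) ≤ m.factorial := by exact_mod_cast m.factorial_pos
      have := bb_abs_le m
      have h2 : |bb m| / (m.factorial : ℝ) ≤ 1 := by
        rw [div_le_one (by positivity)]
        linarith
      simpa using h2
    · exact one_pos
    · intro y hy
      rw [zero_add]
      have hsum : Summable (fun m : ℕ => (bb m : ℂ) * y ^ m / (m.factorial : ℂ)) :=
        Summable.of_norm (g_summable_norm y)
      have heq : (fun m : ℕ => FormalMultilinearSeries.ofScalars ℂ c m fun _ => y)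
          = fun m : ℕ => (bb m : ℂ) * y ^ m / (m.factorial : ℂ) := by
        funext m
        rw [FormalMultilinearSeries.ofScalars_apply_eq]
        simp only [hc, smul_eq_mul]
        ring
      rw [heq, hfg y]
      exact hsum.hasSum
  have h1 : iteratedDeriv n f 0 = (bb n : ℂ) := by
    rw [iteratedDeriv_eq_iteratedFDeriv, ← hps.factorial_smul 1 n,
      FormalMultilinearSeries.ofScalars_apply_eq]
    simp only [hc, one_pow, smul_eq_mul, nsmul_eq_mul, mul_one]
    rw [mul_div_cancel₀]
    exact_mod_cast n.factorial_ne_zero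
  rw [h1]
  have : bb n = (-1)^n * Qr (n-2) := by
    rw [bb, if_neg (by omega)]
  rw [this]
  push_cast
  rw [Qr_cast]
end

section
/- The expected internal path-length of a random symmetric DST admits the exact formula E(X_n) = Q_∞ ∑_{ℓ≥0} (2^ℓ/Q_ℓ) ((1 - 2^{-ℓ})^n - 1 + 2^{-ℓ} n), where Q_ℓ := ∏_{1≤i≤ℓ}(1-2^{-i}) and Q_∞ := ∏_{i≥1}(1-2^{-i}). -/
open Finset Filter

noncomputable def dstq (i : ℕ) : ℝ := 1 - 1/2^(i+1)
noncomputable def dstQ (L : ℕ) : ℝ := ∏ i ∈ Finset.range L, dstq i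

lemma dstq_ge (i : ℕ) : (1:ℝ)/2 ≤ dstq i := by
  have : (1:ℝ)/2^(i+1) ≤ 1/2 := by
    apply div_le_div_of_nonneg_left one_pos.le two_pos
    exact le_self_pow₀ one_le_two (Nat.succ_ne_zero i)
  unfold dstq; linarith

lemma dstq_pos (i : ℕ) : 0 < dstq i := lt_of_lt_of_le (by norm_num) (dstq_ge i)

lemma dstq_lt_one (i : ℕ) : dstq i < 1 := by
  unfold dstq
  have : (0:ℝ) < 1/2^(i+1) := by positivity
  linarith

lemma dstQ_pos (L : ℕ) : 0 < dstQ L := Finset.prod_pos (fun i _ => dstq_pos i)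

lemma dstQ_succ (L : ℕ) : dstQ (L+1) = dstQ L * dstq L := Finset.prod_range_succ _ _

lemma dstQ_ge (L : ℕ) : (1:ℝ)/4 + (1/2)^(L+1) ≤ dstQ L := by
  induction L with
  | zero => simp [dstQ]; norm_num
  | succ L ih =>
    rw [dstQ_succ]
    match L, ih with
    | 0, _ => simp [dstQ, dstq]; norm_num
    | (K+1), ih =>
      have hq : dstq (K+1) = 1 - (1/2)^(K+2) := by
        unfold dstq; rw [div_pow, one_pow]
      have ht : (0:ℝ) < (1/2:ℝ)^(K+2) := by positivity
      have ht2 : ((1:ℝ)/2)^(K+2) ≤ (1/4:ℝ) := by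
        calc ((1:ℝ)/2)^(K+2) ≤ ((1:ℝ)/2)^2 :=
              pow_le_pow_of_le_one (by norm_num) (by norm_num) (by omega)
          _ = 1/4 := by norm_num
      rw [hq]
      have h2 : ((1:ℝ)/2)^(K+1+1+1) = (1/2)*(1/2)^(K+2) := by ring
      nlinarith [dstQ_pos (K+1)]

lemma dstQ_ge' (L : ℕ) : (1:ℝ)/4 ≤ dstQ L :=
  le_trans (le_add_of_nonneg_right (by positivity)) (dstQ_ge L)

lemma neg_log_dstq_le (i : ℕ) : -Real.log (dstq i) ≤ (1/2:ℝ)^i := by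
  have hq := dstq_pos i
  have hq2 := dstq_ge i
  have h3 : Real.log (dstq i)⁻¹ ≤ (dstq i)⁻¹ - 1 :=
    Real.log_le_sub_one_of_pos (by positivity)
  rw [Real.log_inv] at h3
  have h5 : (dstq i)⁻¹ ≤ 2 := by
    rw [inv_le_comm₀ hq (by norm_num)]
    linarith
  have h6 : (dstq i)⁻¹ - 1 = (1 - dstq i) * (dstq i)⁻¹ := by
    field_simp
  have h7 : 1 - dstq i = (1/2:ℝ)^(i+1) := by
    unfold dstq; rw [div_pow, one_pow]; ring
  have h8 : (0:ℝ) ≤ (1/2:ℝ)^(i+1) := by positivity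
  have h9 : (1 - dstq i) * (dstq i)⁻¹ ≤ (1/2:ℝ)^(i+1) * 2 := by
    rw [h7]; exact mul_le_mul_of_nonneg_left h5 h8
  have h10 : ((1/2:ℝ))^(i+1) * 2 = (1/2:ℝ)^i := by ring
  linarith

lemma dstq_multipliable : Multipliable dstq := by
  apply Real.multipliable_of_summable_log (f := dstq)
    (fun i => dstq_pos i) ?_
  apply Summable.of_norm
  have hs : Summable (fun i : ℕ => (1/2:ℝ)^i) :=
    summable_geometric_of_lt_one (by norm_num) (by norm_num)
  apply hs.of_nonneg_of_le (fun i => norm_nonneg _)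
  intro i
  rw [Real.norm_eq_abs, abs_of_nonpos (Real.log_nonpos (dstq_pos i).le (dstq_lt_one i).le)]
  exact neg_log_dstq_le i

noncomputable def dstQinf : ℝ := ∏' i : ℕ, dstq i

lemma dstQ_tendsto : Filter.Tendsto dstQ Filter.atTop (nhds dstQinf) :=
  dstq_multipliable.hasProd.tendsto_prod_nat

lemma dstQinf_ge : (1:ℝ)/4 ≤ dstQinf :=
  ge_of_tendsto' dstQ_tendsto dstQ_ge'

lemma dstQinf_pos : (0:ℝ) < dstQinf := lt_of_lt_of_le (by norm_num) dstQinf_ge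

lemma dst_partial (L : ℕ) :
    ∑ ℓ ∈ Finset.range (L+1), dstQinf * ((1/2:ℝ)^ℓ / dstQ ℓ) = dstQinf / dstQ L := by
  induction L with
  | zero => simp [dstQ]
  | succ L ih =>
    rw [Finset.sum_range_succ, ih, dstQ_succ]
    have h1 : dstQ L ≠ 0 := (dstQ_pos L).ne'
    have h2 : dstq L ≠ 0 := (dstq_pos L).ne'
    have h3 : dstq L = 1 - (1/2:ℝ)^(L+1) := by
      unfold dstq; rw [div_pow, one_pow]
    have h4 : (2:ℝ)^L ≠ 0 := by positivity
    simp only [div_pow, one_pow] at h3 ⊢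
    field_simp
    rw [h3]
    field_simp
    ring

lemma dst_key : HasSum (fun ℓ : ℕ => dstQinf * ((1/2:ℝ)^ℓ / dstQ ℓ)) 1 := by
  rw [hasSum_iff_tendsto_nat_of_nonneg
    (fun i => by have := dstQinf_pos; have := dstQ_pos i; positivity)]
  rw [← tendsto_add_atTop_iff_nat 1]
  have : (fun L => ∑ ℓ ∈ Finset.range (L+1), dstQinf * ((1/2:ℝ)^ℓ / dstQ ℓ))
      = fun L => dstQinf / dstQ L := funext dst_partial
  rw [this]
  have := Filter.Tendsto.div (tendsto_const_nhds (x := dstQinf)) dstQ_tendsto dstQinf_pos.ne'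
  rw [div_self dstQinf_pos.ne'] at this; exact this

lemma binom1 (a : ℝ) (n : ℕ) :
    ∑ j ∈ Finset.range (n+1), (n.choose j : ℝ) * a^j = (a+1)^n := by
  rw [add_pow]
  apply Finset.sum_congr rfl
  intro j hj
  ring

lemma binom2 (n : ℕ) :
    ∑ j ∈ Finset.range (n+1), (n.choose j : ℝ) = 2^n := by
  have := Nat.sum_range_choose n
  exact_mod_cast congrArg (Nat.cast : ℕ → ℝ) this

lemma binom3 (n : ℕ) :
    ∑ j ∈ Finset.range (n+1), (n.choose j : ℝ) * j = n * 2^n / 2 := by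
  have hrefl : ∑ j ∈ Finset.range (n+1), (n.choose j : ℝ) * j
      = ∑ j ∈ Finset.range (n+1), (n.choose j : ℝ) * ((n:ℝ) - j) := by
    rw [← Finset.sum_range_reflect]
    apply Finset.sum_congr rfl
    intro j hj
    have hj' : j ≤ n := Nat.lt_succ_iff.mp (Finset.mem_range.mp hj)
    have h1 : n + 1 - 1 - j = n - j := by omega
    rw [h1, Nat.choose_symm hj', Nat.cast_sub hj']
  have hsum : (∑ j ∈ Finset.range (n+1), (n.choose j : ℝ) * j)
      + ∑ j ∈ Finset.range (n+1), (n.choose j : ℝ) * j = n * 2^n := by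
    nth_rewrite 2 [hrefl]
    rw [← Finset.sum_add_distrib]
    have : ∀ j ∈ Finset.range (n+1),
        (n.choose j : ℝ) * j + (n.choose j : ℝ) * ((n:ℝ) - j) = (n:ℝ) * (n.choose j : ℝ) := by
      intro j _; ring
    rw [Finset.sum_congr rfl this, ← Finset.mul_sum, binom2]
  linarith

noncomputable def dstF (ℓ n : ℕ) : ℝ :=
  dstQinf * ((2:ℝ)^ℓ / dstQ ℓ) * ((1 - 1/2^ℓ)^n - 1 + (n:ℝ)/2^ℓ)

lemma dst_step (n ℓ : ℕ) :
    (2/2^n) * ∑ j ∈ Finset.range (n+1), (n.choose j : ℝ) * dstF ℓ j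
      = dstF (ℓ+1) (n+1) - n * (dstQinf * ((1/2:ℝ)^(ℓ+1) / dstQ (ℓ+1))) := by
  have hsplit : ∑ j ∈ Finset.range (n+1), (n.choose j : ℝ) * dstF ℓ j
      = dstQinf * ((2:ℝ)^ℓ / dstQ ℓ) *
        ((∑ j ∈ Finset.range (n+1), (n.choose j : ℝ) * (1 - 1/2^ℓ)^j)
          - (∑ j ∈ Finset.range (n+1), (n.choose j : ℝ))
          + (1/2^ℓ) * ∑ j ∈ Finset.range (n+1), (n.choose j : ℝ) * j) := by
    simp only [mul_add, mul_sub, Finset.mul_sum]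
    rw [← Finset.sum_sub_distrib, ← Finset.sum_add_distrib]
    exact Finset.sum_congr rfl fun j _ => by unfold dstF; ring
  rw [hsplit, binom1, binom2, binom3]
  have hx : ((1:ℝ) - 1/2^ℓ) + 1 = 2 * (1 - 1/2^(ℓ+1)) := by
    rw [pow_succ]
    have : (2:ℝ)^ℓ ≠ 0 := by positivity
    field_simp
    ring
  rw [hx, mul_pow]
  unfold dstF
  rw [dstQ_succ]
  have hq : dstq ℓ = 1 - 1/2^(ℓ+1) := rfl
  rw [hq, pow_succ ((1:ℝ) - 1/2^(ℓ+1)) n]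
  have h1 : dstQ ℓ ≠ 0 := (dstQ_pos ℓ).ne'
  have h2 : (2:ℝ)^ℓ ≠ 0 := by positivity
  have h3 : (2:ℝ)^n ≠ 0 := by positivity
  have h4 : (1:ℝ) - 1/2^(ℓ+1) ≠ 0 := by rw [← hq]; exact (dstq_pos ℓ).ne'
  have h5 : (2:ℝ)^(ℓ+1) = 2 * 2^ℓ := by rw [pow_succ]; ring
  simp only [div_pow, one_pow, h5, Nat.cast_add, Nat.cast_one]
  rw [h5] at h4
  have h6 : (2:ℝ) * 2^ℓ - 1 ≠ 0 := by
    have : (1:ℝ) ≤ 2^ℓ := one_le_pow₀ (by norm_num)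
    intro hcon; nlinarith
  generalize hw : ((1:ℝ) - 1/(2 * 2^ℓ))^n = w
  field_simp
  ring

lemma dst_main (μ : ℕ → ℝ) (h0 : μ 0 = 0)
    (hrec : ∀ n : ℕ,
      μ (n + 1) = (2 / 2 ^ n) * ∑ j ∈ Finset.range (n + 1), (n.choose j : ℝ) * μ j + n)
    (n : ℕ) : HasSum (fun ℓ => dstF ℓ n) (μ n) := by
  induction n using Nat.strong_induction_on with
  | _ n ih =>
    match n with
    | 0 =>
      have : (fun ℓ => dstF ℓ 0) = fun _ => (0:ℝ) := by
        funext ℓ; unfold dstF; simp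
      rw [this, h0]
      exact hasSum_zero
    | (n+1) =>
      have h1 : HasSum (fun ℓ => ∑ j ∈ Finset.range (n+1), (n.choose j : ℝ) * dstF ℓ j)
          (∑ j ∈ Finset.range (n+1), (n.choose j : ℝ) * μ j) := by
        apply hasSum_sum
        intro j hj
        exact (ih j (Finset.mem_range.mp hj)).mul_left _
      have h2 := h1.mul_left (2/2^n : ℝ)
      set t : ℕ → ℝ := fun ℓ => dstQinf * ((1/2:ℝ)^ℓ / dstQ ℓ) with ht
      have ht0 : t 0 = dstQinf := by simp [ht, dstQ]
      have h3 : HasSum (fun ℓ => t (ℓ+1)) (1 - dstQinf) := by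
        apply (hasSum_nat_add_iff 1).mpr
        have : (1 - dstQinf) + ∑ i ∈ Finset.range 1, t i = 1 := by
          simp [ht0]
        rw [this]
        exact dst_key
      have h4 := h3.mul_left (n : ℝ)
      have h5 : HasSum (fun ℓ => dstF (ℓ+1) (n+1))
          ((2/2^n : ℝ) * ∑ j ∈ Finset.range (n+1), (n.choose j : ℝ) * μ j
            + (n : ℝ) * (1 - dstQinf)) := by
        have he : (fun ℓ => (2/2^n : ℝ) * ∑ j ∈ Finset.range (n+1), (n.choose j : ℝ) * dstF ℓ j
              + (n : ℝ) * t (ℓ+1)) = fun ℓ => dstF (ℓ+1) (n+1) := by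
          funext ℓ
          rw [dst_step n ℓ]
          ring
        exact he ▸ (h2.add h4)
      have h6 := (hasSum_nat_add_iff (f := fun ℓ => dstF ℓ (n+1)) 1).mp h5
      have hF0 : ∑ i ∈ Finset.range 1, dstF i (n+1) = (n : ℝ) * dstQinf := by
        unfold dstF dstQ
        simp [zero_pow (Nat.succ_ne_zero n)]
        ring
      rw [hF0] at h6
      have : (2/2^n : ℝ) * ∑ j ∈ Finset.range (n+1), (n.choose j : ℝ) * μ j
            + (n : ℝ) * (1 - dstQinf) + (n : ℝ) * dstQinf = μ (n+1) := by
        rw [hrec n]; ring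
      rwa [this] at h6

/-- The expected internal path-length of a random symmetric DST admits the exact formula
E(X_n) = Q_∞ ∑_{ℓ≥0} (2^ℓ/Q_ℓ) ((1 - 2^{-ℓ})^n - 1 + 2^{-ℓ} n). -/
theorem dst_mean_exact_formula (μ : ℕ → ℝ) (h0 : μ 0 = 0)
    (hrec : ∀ n : ℕ,
      μ (n + 1) = (2 / 2 ^ n) * ∑ j ∈ Finset.range (n + 1), (n.choose j : ℝ) * μ j + n)
    (n : ℕ) :
    HasSum
      (fun ℓ : ℕ =>
        (∏' i : ℕ, (1 - (1 : ℝ) / 2 ^ (i + 1))) *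
          ((2 : ℝ) ^ ℓ / ∏ i ∈ Finset.range ℓ, (1 - (1 : ℝ) / 2 ^ (i + 1))) *
          ((1 - 1 / 2 ^ ℓ) ^ n - 1 + (n : ℝ) / 2 ^ ℓ))
      (μ n) := by
  exact dst_main μ h0 hrec n
end

section
/- For every n ≥ 1, ∑_{0≤k≤n} C(n,k) |n - 2k| = 2·n! / (⌊n/2⌋! · (⌈n/2⌉ - 1)!). -/
/-- Telescoping: ∑_{k=0}^{m} (n-2k) C(n,k) = n C(n-1,m). -/
lemma tele (n : ℕ) : ∀ m : ℕ, ∑ k ∈ Finset.range (m + 1),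
    (n.choose k : ℝ) * ((n : ℝ) - 2 * k) = n * (n - 1).choose m := by
  intro m
  induction m with
  | zero => simp
  | succ m ih =>
    rw [Finset.sum_range_succ, ih]
    rcases le_or_gt (m + 1) n with h | h
    · have hn1 : 1 ≤ n := by omega
      have f1 : (n : ℝ) * (n - 1).choose m = (m + 1) * n.choose (m + 1) := by
        have := Nat.add_one_mul_choose_eq (n - 1) m
        rw [Nat.sub_add_cancel hn1] at this
        exact_mod_cast this.trans (Nat.mul_comm _ _)
      have f2 : (n : ℝ) * (n - 1).choose (m + 1) = ((n : ℝ) - (m + 1)) * n.choose (m + 1) := by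
        have h1 := Nat.add_one_mul_choose_eq (n - 1) (m + 1)
        rw [Nat.sub_add_cancel hn1] at h1
        have h2 := Nat.choose_succ_right_eq n (m + 1)
        have : n * (n - 1).choose (m + 1) = n.choose (m + 1) * (n - (m + 1)) := by
          rw [h1]; exact h2
        rw [show ((n : ℝ) - (m + 1)) = ((n - (m + 1) : ℕ) : ℝ) by
          push_cast [Nat.cast_sub h]; ring]
        exact_mod_cast this.trans (Nat.mul_comm _ _)
      push_cast at f1 f2 ⊢
      linarith
    · have c1 : n.choose (m + 1) = 0 := Nat.choose_eq_zero_of_lt h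
      have c2 : (n - 1).choose (m + 1) = 0 := Nat.choose_eq_zero_of_lt (by omega)
      rcases Nat.eq_zero_or_pos n with rfl | hn0
      · simp
      · have c3 : (n - 1).choose m = 0 := Nat.choose_eq_zero_of_lt (by omega)
        simp [c1, c2, c3]

/-- For n ≥ 1, ∑_{0≤k≤n} C(n,k)|n-2k| = 2·n!/(⌊n/2⌋!·(⌈n/2⌉-1)!). -/
theorem binomial_abs_diff_sum (n : ℕ) (hn : 1 ≤ n) :
    (∑ k ∈ Finset.range (n + 1), (n.choose k : ℝ) * |(n : ℝ) - 2 * k|) =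
      2 * (n.factorial : ℝ) / ((n / 2).factorial * ((n + 1) / 2 - 1).factorial) := by
  set m := (n + 1) / 2 - 1 with hm
  have hm1 : m + 1 ≤ n + 1 := by omega
  -- split the sum
  rw [Finset.range_eq_Ico, ← Finset.sum_Ico_consecutive _ (Nat.zero_le (m + 1)) hm1]
  have hS1 : ∑ k ∈ Finset.Ico 0 (m + 1), (n.choose k : ℝ) * |(n : ℝ) - 2 * k|
      = ∑ k ∈ Finset.range (m + 1), (n.choose k : ℝ) * ((n : ℝ) - 2 * k) := by
    rw [← Finset.range_eq_Ico]
    refine Finset.sum_congr rfl fun k hk => ?_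
    rw [abs_of_nonneg]
    have hk' : 2 * k ≤ n := by
      have := Finset.mem_range.mp hk; omega
    have : (2 * k : ℝ) ≤ n := by exact_mod_cast hk'
    linarith
  have hS2 : ∑ k ∈ Finset.Ico (m + 1) (n + 1), (n.choose k : ℝ) * |(n : ℝ) - 2 * k|
      = -∑ k ∈ Finset.Ico (m + 1) (n + 1), (n.choose k : ℝ) * ((n : ℝ) - 2 * k) := by
    rw [← Finset.sum_neg_distrib]
    refine Finset.sum_congr rfl fun k hk => ?_
    rw [abs_of_nonpos, mul_neg]
    have hk' : n ≤ 2 * k := by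
      have := (Finset.mem_Ico.mp hk).1; omega
    have : (n : ℝ) ≤ 2 * k := by exact_mod_cast hk'
    linarith
  have htot : ∑ k ∈ Finset.Ico 0 (n + 1), (n.choose k : ℝ) * ((n : ℝ) - 2 * k) = 0 := by
    rw [← Finset.range_eq_Ico, tele]
    rw [Nat.choose_eq_zero_of_lt (by omega)]
    simp
  have hIco : ∑ k ∈ Finset.Ico (m + 1) (n + 1), (n.choose k : ℝ) * ((n : ℝ) - 2 * k)
      = - (n * (n - 1).choose m) := by
    have h2 := Finset.sum_Ico_consecutive (fun k => (n.choose k : ℝ) * ((n : ℝ) - 2 * k))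
      (Nat.zero_le (m + 1)) hm1
    have h1 : ∑ k ∈ Finset.Ico 0 (m + 1), (n.choose k : ℝ) * ((n : ℝ) - 2 * k)
        = n * (n - 1).choose m := by rw [← Finset.range_eq_Ico, tele]
    linarith [h2, h1, htot]
  rw [hS1, hS2, hIco, tele]
  -- now: n * C(n-1,m) + -(-(n*C(n-1,m))) = 2 n!/((n/2)! m!)
  have key : ((n - 1).choose m : ℝ) * (m.factorial : ℝ) * ((n / 2).factorial : ℝ)
      = ((n - 1).factorial : ℝ) := by
    have h := Nat.choose_mul_factorial_mul_factorial (show m ≤ n - 1 by omega)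
    have hnm : n - 1 - m = n / 2 := by omega
    rw [hnm] at h
    exact_mod_cast h
  have hfac : (n.factorial : ℝ) = n * (n - 1).factorial := by
    have : n.factorial = n * (n - 1).factorial := by
      conv_lhs => rw [show n = (n - 1) + 1 by omega]
      rw [Nat.factorial_succ]; congr 1; omega
    exact_mod_cast this
  have hpos1 : (0 : ℝ) < (n / 2).factorial := by exact_mod_cast (n / 2).factorial_pos
  have hpos2 : (0 : ℝ) < m.factorial := by exact_mod_cast m.factorial_pos
  field_simp
  rw [hfac]
  nlinarith [key]
end

section
/- Let f̃₁, f̃₂, h̃₁, h̃₂ be entire functions with f̃₁(0) = f̃₂(0) = 0 satisfying f̃₁ + f̃₁' = 2 f̃₁(·/2) + h̃₁ and f̃₂ + f̃₂' = 2 f̃₂(·/2) + h̃₂. Then Ṽ(z) := f̃₂(z) - f̃₁(z)² - z f̃₁'(z)² satisfies Ṽ(0) = 0 and Ṽ(z) + Ṽ'(z) = 2Ṽ(z/2) + g̃(z), where g̃(z) = z f̃₁''(z)² + h̃₂(z) - h̃₁(z)² - z h̃₁'(z)² - 4 h̃₁(z) f̃₁(z/2) - 2z h̃₁'(z) f̃₁'(z/2)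 - 2 f̃₁(z/2)². -/
/-- If entire f̃₁, f̃₂ satisfy the DST-type equations f̃ᵢ + f̃ᵢ' = 2 f̃ᵢ(·/2) + h̃ᵢ with
f̃₁(0) = f̃₂(0) = 0, then Ṽ(z) = f̃₂(z) - f̃₁(z)² - z f̃₁'(z)² satisfies Ṽ(0) = 0 and
Ṽ + Ṽ' = 2Ṽ(·/2) + g̃ with the stated g̃. -/
theorem poissonized_variance_equation (f1 f2 h1 h2 : ℂ → ℂ)
    (hf1 : Differentiable ℂ f1) (hf2 : Differentiable ℂ f2)
    (hh1 : Differentiable ℂ h1) (hh2 : Differentiable ℂ h2)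
    (hf10 : f1 0 = 0) (hf20 : f2 0 = 0)
    (e1 : ∀ z : ℂ, f1 z + deriv f1 z = 2 * f1 (z / 2) + h1 z)
    (e2 : ∀ z : ℂ, f2 z + deriv f2 z = 2 * f2 (z / 2) + h2 z)
    (V g : ℂ → ℂ)
    (hV : ∀ z : ℂ, V z = f2 z - f1 z ^ 2 - z * (deriv f1 z) ^ 2)
    (hg : ∀ z : ℂ, g z =
      z * (iteratedDeriv 2 f1 z) ^ 2 + h2 z - h1 z ^ 2 - z * (deriv h1 z) ^ 2 -
        4 * h1 z * f1 (z / 2) - 2 * z * deriv h1 z * deriv f1 (z / 2) - 2 * f1 (z / 2) ^ 2) :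
    V 0 = 0 ∧ ∀ z : ℂ, V z + deriv V z = 2 * V (z / 2) + g z := by
  -- deriv f1 expressed via the functional equation
  have hdf1 : deriv f1 = fun z => 2 * f1 (z / 2) + h1 z - f1 z := by
    funext z; linear_combination e1 z
  have hf1half : Differentiable ℂ (fun z : ℂ => f1 (z / 2)) :=
    hf1.comp (differentiable_id.div_const 2)
  have hf1' : Differentiable ℂ (deriv f1) := by
    rw [hdf1]; exact ((hf1half.const_mul 2).add hh1).sub hf1
  -- second derivative identity
  have hd2 : ∀ z : ℂ, deriv (deriv f1) z
      = 2 * (deriv f1 (z / 2) * (1 / 2)) + deriv h1 z - deriv f1 z := by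
    intro z
    conv_lhs => rw [hdf1]
    have Hc : HasDerivAt (fun x : ℂ => f1 (x / 2)) (deriv f1 (z / 2) * (1 / 2)) z :=
      ((hf1 (z / 2)).hasDerivAt).comp z ((hasDerivAt_id z).div_const 2)
    have H := ((Hc.const_mul 2).add (hh1 z).hasDerivAt).sub (hf1 z).hasDerivAt
    exact H.deriv
  -- derivative of V
  have hVfun : V = fun x => f2 x - f1 x ^ 2 - x * (deriv f1 x) ^ 2 := funext hV
  have hVd : ∀ z : ℂ, deriv V z = deriv f2 z - (2 : ℕ) * f1 z ^ 1 * deriv f1 z -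
      (1 * (deriv f1 z) ^ 2 + z * ((2 : ℕ) * deriv f1 z ^ 1 * deriv (deriv f1) z)) := by
    intro z
    rw [hVfun]
    have H := (((hf2 z).hasDerivAt.sub (((hf1 z).hasDerivAt).pow 2)).sub
      ((hasDerivAt_id z).mul (((hf1' z).hasDerivAt).pow 2)))
    exact H.deriv
  have hit : iteratedDeriv 2 f1 = deriv (deriv f1) := by
    rw [iteratedDeriv_succ, iteratedDeriv_one]
  constructor
  · rw [hV 0, hf10, hf20]; ring
  · intro z
    rw [hV z, hV (z / 2), hg z, hVd z, hit]
    push_cast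
    linear_combination e2 z -
      (f1 z + deriv f1 z + 2 * f1 (z / 2) + h1 z) * e1 z -
      z * (deriv f1 z + deriv (deriv f1) z + deriv f1 (z / 2) + deriv h1 z) * hd2 z
end
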